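/- arXiv:2501.11157 — 5 statements merged into one kernel-verified Lean document; each statement's English description precedes it below -/
import Mathlib

section
/- Let T be the complete binary tree of height h. Then thin(T) = ⌈(h+1)/3⌉. -/
open SimpleGraph

variable {V : Type*}

def Consistent (G : SimpleGraph V) (r : V → V → Prop) {k : ℕ} (C : V → Fin k) : Prop :=
  ∀ u v w, r u v → r v w → C u = C v → G.Adj u w → G.Adj v w

def IsKThin (G : SimpleGraph V) (k : ℕ) : Prop :=
  ∃ r : V → V → Prop, IsStrictTotalOrder V r ∧ ∃ C : V → Fin k, Consistent G r C

noncomputable def Thinness (G : SimpleGraph V) : ℕ := sInf {k | IsKThin G k}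

noncomputable def DanglingThin (G : SimpleGraph V) (v u : V) : ℕ :=
  Thinness (G.induce ((G.deleteEdges {s(v,u)}).connectedComponentMk u).supp)

def KNeighbor (G : SimpleGraph V) (k : ℕ) (x v : V) : Prop :=
  G.Adj x v ∧ ∃ u, G.Adj v u ∧ u ≠ x ∧ k ≤ DanglingThin G v u

def IsChild (G : SimpleGraph V) (rt x v : V) : Prop :=
  G.Adj x v ∧ G.dist rt x + 1 = G.dist rt v

def IsAncestor (G : SimpleGraph V) (rt v x : V) : Prop :=
  v ≠ x ∧ G.dist rt v + G.dist v x = G.dist rt x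

def Subtree (G : SimpleGraph V) (rt v : V) : Set V :=
  {w | G.dist rt v + G.dist v w = G.dist rt w}

def ChildKNeighbor (G : SimpleGraph V) (rt : V) (k : ℕ) (x v : V) : Prop :=
  IsChild G rt x v ∧ KNeighbor G k x v

noncomputable def Critical (G : SimpleGraph V) (rt x : V) : Prop :=
  {v | ChildKNeighbor G rt (Thinness G) x v}.ncard = 2

def IsCompleteMAryTree (G : SimpleGraph V) (rt : V) (m h : ℕ) : Prop :=
  G.IsTree ∧ ∀ v : V,
    {c | IsChild G rt v c}.ncard = m ∨ ({c | IsChild G rt v c} = ∅ ∧ G.dist rt v = h)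



namespace CBT
set_option linter.unusedSectionVars false


def endS : List Bool → ℕ
  | [] => 8
  | [a] => if a then 15 else 7
  | a :: b :: _ => (if a then 8 else 0) + (if b then 4 else 1)

def thrS (a b c : Bool) : ℕ := (if a then 8 else 0) + (if b then 4 else 1) + (if c then 2 else 1)

def key : List Bool → List ℕ
  | a :: b :: c :: t => thrS a b c :: key t
  | l => [endS l]

@[simp] lemma key_nil : key [] = [8] := rfl
@[simp] lemma key_one (a : Bool) : key [a] = [endS [a]] := rfl
@[simp] lemma key_two (a b : Bool) : key [a, b] = [endS [a, b]] := rfl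
@[simp] lemma key_chunk (a b c : Bool) (t : List Bool) :
    key (a :: b :: c :: t) = thrS a b c :: key t := rfl

def unchunk : List (Bool × Bool × Bool) → List Bool
  | [] => []
  | (a, b, c) :: K => a :: b :: c :: unchunk K

def thrT (q : Bool × Bool × Bool) : ℕ := thrS q.1 q.2.1 q.2.2

@[simp] lemma unchunk_nil : unchunk [] = [] := rfl
@[simp] lemma unchunk_cons (a b c : Bool) (K) :
    unchunk ((a,b,c) :: K) = a :: b :: c :: unchunk K := rfl

@[simp] lemma unchunk_length (K : List (Bool × Bool × Bool)) :
    (unchunk K).length = 3 * K.length := by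
  induction K with
  | nil => simp
  | cons k K ih => rcases k with ⟨a, b, c⟩; simp [ih]; ring

lemma key_unchunk_append (K : List (Bool × Bool × Bool)) (ρ : List Bool) :
    key (unchunk K ++ ρ) = K.map thrT ++ key ρ := by
  induction K with
  | nil => simp
  | cons k K ih => rcases k with ⟨a, b, c⟩; simp [thrT, ih]

lemma exists_decomp (l : List Bool) :
    ∃ K ρ, l = unchunk K ++ ρ ∧ ρ.length ≤ 2 := by
  suffices h : ∀ n (l : List Bool), l.length ≤ n → ∃ K ρ, l = unchunk K ++ ρ ∧ ρ.length ≤ 2 from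
    h l.length l le_rfl
  intro n
  induction n with
  | zero => intro l hl; exact ⟨[], l, by simp, by omega⟩
  | succ n ih =>
    intro l hl
    match l with
    | [] => exact ⟨[], [], by simp, by simp⟩
    | [a] => exact ⟨[], [a], by simp, by simp⟩
    | [a, b] => exact ⟨[], [a, b], by simp, by simp⟩
    | a :: b :: c :: t =>
      have ht : t.length ≤ n := by simp at hl; omega
      obtain ⟨K, ρ, h1, h2⟩ := ih t ht
      exact ⟨(a,b,c) :: K, ρ, by simp [h1], h2⟩

lemma ne_end_thr (ρ : List Bool) (hρ : ρ.length ≤ 2) (a b c : Bool) :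
    endS ρ ≠ thrS a b c := by
  match ρ with
  | [] => rcases a <;> rcases b <;> rcases c <;> simp [endS, thrS]
  | [x] => rcases x <;> rcases a <;> rcases b <;> rcases c <;> simp [endS, thrS]
  | [x, y] => rcases x <;> rcases y <;> rcases a <;> rcases b <;> rcases c <;> simp [endS, thrS]
  | _ :: _ :: _ :: _ => simp at hρ

lemma thr_inj {a b c a' b' c' : Bool} (h : thrS a b c = thrS a' b' c') :
    a = a' ∧ b = b' ∧ c = c' := by
  revert h; rcases a <;> rcases b <;> rcases c <;> rcases a' <;> rcases b' <;> rcases c' <;>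
    simp [thrS]

lemma end_inj {ρ ρ' : List Bool} (hρ : ρ.length ≤ 2) (hρ' : ρ'.length ≤ 2)
    (h : endS ρ = endS ρ') : ρ = ρ' := by
  match ρ, ρ' with
  | [], [] => rfl
  | [], [x] | [x], [] => revert h; rcases x <;> simp [endS]
  | [], [x, y] | [x, y], [] => revert h; rcases x <;> rcases y <;> simp [endS]
  | [x], [y] => revert h; rcases x <;> rcases y <;> simp [endS]
  | [x], [y, z] | [y, z], [x] => revert h; rcases x <;> rcases y <;> rcases z <;> simp [endS]
  | [x, y], [z, w] => revert h; rcases x <;> rcases y <;> rcases z <;> rcases w <;> simp [endS]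
  | _ :: _ :: _ :: _, _ => simp at hρ
  | _, _ :: _ :: _ :: _ => simp at hρ'

-- ======== section 2 ========

lemma key_short (ρ : List Bool) (hρ : ρ.length ≤ 2) : key ρ = [endS ρ] := by
  match ρ with
  | [] => rfl
  | [a] => rfl
  | [a, b] => rfl
  | a :: b :: c :: t => simp at hρ

lemma endS_mem (ρ : List Bool) (hρ : ρ.length ≤ 2) :
    endS ρ = 1 ∨ endS ρ = 4 ∨ endS ρ = 7 ∨ endS ρ = 8 ∨ endS ρ = 9 ∨
      endS ρ = 12 ∨ endS ρ = 15 := by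
  match ρ with
  | [] => simp [endS]
  | [a] => rcases a <;> simp [endS]
  | [a, b] => rcases a <;> rcases b <;> simp [endS]
  | a :: b :: c :: t => simp at hρ

@[simp] lemma endS_e : endS [] = 8 := rfl
@[simp] lemma endS_f : endS [false] = 7 := rfl
@[simp] lemma endS_t : endS [true] = 15 := rfl
@[simp] lemma endS_ff : endS [false, false] = 1 := rfl
@[simp] lemma endS_ft : endS [false, true] = 4 := rfl
@[simp] lemma endS_tf : endS [true, false] = 9 := rfl
@[simp] lemma endS_tt : endS [true, true] = 12 := rfl

lemma thr_near (a b c : Bool) :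
    endS [a, b] < thrS a b c ∧ thrS a b c ≤ endS [a, b] + 2 := by
  rcases a <;> rcases b <;> rcases c <;> simp [endS, thrS]

lemma lenAB (K : List (Bool × Bool × Bool)) (ρ : List Bool) :
    (unchunk K ++ ρ).length = 3 * K.length + ρ.length := by
  rw [List.length_append, unchunk_length]

lemma endS_two (a b : Bool) :
    endS [a, b] = 1 ∨ endS [a, b] = 4 ∨ endS [a, b] = 9 ∨ endS [a, b] = 12 := by
  rcases a <;> rcases b <;> simp

abbrev LexLt : List ℕ → List ℕ → Prop := List.Lex (· < ·)

lemma lexlt_trans {s t u : List ℕ} (h1 : LexLt s t) (h2 : LexLt t u) : LexLt s u :=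
  List.lt_trans (α := ℕ) h1 h2

lemma lex_cons_inv {a b : ℕ} {s t : List ℕ} (h : LexLt (a :: s) (b :: t)) :
    a < b ∨ (a = b ∧ LexLt s t) := by
  cases h with
  | rel h => exact Or.inl h
  | cons h => exact Or.inr ⟨rfl, h⟩

lemma not_lex_nil {s : List ℕ} (h : LexLt s []) : False := by cases h

lemma lex_singleton_inv {a b : ℕ} (h : LexLt [a] [b]) : a < b := by
  rcases lex_cons_inv h with hlt | ⟨heq, hnil⟩
  · exact hlt
  · exact (not_lex_nil hnil).elim

lemma lex_strip {M s t : List ℕ} (h : LexLt (M ++ s) (M ++ t)) : LexLt s t := by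
  induction M with
  | nil => exact h
  | cons m M ih =>
    rcases lex_cons_inv h with h' | ⟨_, h'⟩
    · exact absurd h' (lt_irrefl m)
    · exact ih h'

lemma lex_append_left {M s t : List ℕ} (h : LexLt s t) : LexLt (M ++ s) (M ++ t) :=
  List.Lex.append_left _ h _

lemma sand : ∀ (K : List (Bool × Bool × Bool)) (v : List Bool) (s₁ s₂ : List ℕ),
    LexLt (K.map thrT ++ s₁) (key v) → LexLt (key v) (K.map thrT ++ s₂) →
    ∃ τ, v = unchunk K ++ τ := by
  intro K
  induction K with
  | nil => intro v s₁ s₂ _ _; exact ⟨v, by simp⟩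
  | cons k K ih =>
    intro v s₁ s₂ h1 h2
    rcases k with ⟨a, b, c⟩
    have hmap : ((a,b,c) :: K).map thrT = thrS a b c :: K.map thrT := rfl
    rw [hmap] at h1 h2
    match v with
    | x :: y :: z :: t =>
      rw [key_chunk] at h1 h2
      rw [List.cons_append] at h1 h2
      rcases lex_cons_inv h1 with hlt1 | ⟨heq1, h1'⟩
      · rcases lex_cons_inv h2 with hlt2 | ⟨heq2, _⟩
        · exact absurd (lt_trans hlt1 hlt2) (lt_irrefl _)
        · exact absurd heq2.symm (ne_of_lt hlt1)
      · obtain ⟨rfl, rfl, rfl⟩ := thr_inj heq1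
        rcases lex_cons_inv h2 with hlt2 | ⟨_, h2'⟩
        · exact absurd hlt2 (lt_irrefl _)
        · obtain ⟨τ, hτ⟩ := ih t s₁ s₂ h1' h2'
          exact ⟨τ, by simp [hτ]⟩
    | [] =>
      rw [key_nil] at h1 h2
      rw [List.cons_append] at h1 h2
      rcases lex_cons_inv h1 with hlt1 | ⟨heq1, h1'⟩
      · rcases lex_cons_inv h2 with hlt2 | ⟨heq2, _⟩
        · exact absurd (lt_trans hlt1 hlt2) (lt_irrefl _)
        · exact absurd heq2 (ne_end_thr [] (by simp) a b c)
      · exact absurd heq1.symm (ne_end_thr [] (by simp) a b c)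
    | [x] =>
      rw [key_one] at h1 h2
      rw [List.cons_append] at h1 h2
      rcases lex_cons_inv h1 with hlt1 | ⟨heq1, h1'⟩
      · rcases lex_cons_inv h2 with hlt2 | ⟨heq2, _⟩
        · exact absurd (lt_trans hlt1 hlt2) (lt_irrefl _)
        · exact absurd heq2 (ne_end_thr [x] (by simp) a b c)
      · exact absurd heq1.symm (ne_end_thr [x] (by simp) a b c)
    | [x, y] =>
      rw [key_two] at h1 h2
      rw [List.cons_append] at h1 h2
      rcases lex_cons_inv h1 with hlt1 | ⟨heq1, h1'⟩
      · rcases lex_cons_inv h2 with hlt2 | ⟨heq2, _⟩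
        · exact absurd (lt_trans hlt1 hlt2) (lt_irrefl _)
        · exact absurd heq2 (ne_end_thr [x, y] (by simp) a b c)
      · exact absurd heq1.symm (ne_end_thr [x, y] (by simp) a b c)

def adjL (u v : List Bool) : Prop := (∃ c, v = u ++ [c]) ∨ (∃ c, u = v ++ [c])


theorem consistent_main (u v w : List Bool)
    (huv : LexLt (key u) (key v)) (hvw : LexLt (key v) (key w))
    (hc : u.length / 3 = v.length / 3) (hadj : adjL u w) : adjL v w := by
  have huw : LexLt (key u) (key w) := lexlt_trans huv hvw
  rcases hadj with ⟨x, rfl⟩ | ⟨x, hu⟩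
  · -- Case A : w = u ++ [x]
    obtain ⟨K, ρ, rfl, hρ⟩ := exists_decomp u
    match ρ, hρ with
    | [], _ =>
      simp only [List.append_nil] at huv hvw huw hc ⊢
      have hku : key (unchunk K) = K.map thrT ++ [8] := by simpa using key_unchunk_append K []
      rcases x with _ | _
      · exfalso
        rw [key_unchunk_append K [false], hku] at huw
        have h := lex_strip huw
        rw [key_short [false] (by simp)] at h
        have h2 := lex_singleton_inv h
        simp at h2
      · rw [hku] at huv
        rw [key_unchunk_append K [true]] at hvw
        obtain ⟨τ, rfl⟩ := sand K v [8] (key [true]) huv hvw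
        have hτlen : τ.length ≤ 2 := by
          rw [lenAB K τ, unchunk_length] at hc; omega
        rw [key_unchunk_append] at huv hvw
        have h1 := lex_strip huv
        have h2 := lex_strip hvw
        rw [key_short τ hτlen] at h1 h2
        have h8 : 8 < endS τ := lex_singleton_inv h1
        have h15 : endS τ < 15 := by
          rw [key_short [true] (by simp)] at h2
          have := lex_singleton_inv h2
          simpa using this
        have hmem := endS_mem τ hτlen
        have h912 : endS τ = 9 ∨ endS τ = 12 := by
          rcases hmem with h|h|h|h|h|h|h <;> omega
        have hτ : τ = [true, false] ∨ τ = [true, true] := by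
          rcases h912 with h | h
          · exact Or.inl (end_inj hτlen (by simp) (by rw [h]; rfl))
          · exact Or.inr (end_inj hτlen (by simp) (by rw [h]; rfl))
        rcases hτ with rfl | rfl
        · exact Or.inr ⟨false, by simp⟩
        · exact Or.inr ⟨true, by simp⟩
    | [a], _ =>
      exfalso
      have hw : unchunk K ++ [a] ++ [x] = unchunk K ++ [a, x] := by simp
      rw [hw, key_unchunk_append K [a,x], key_unchunk_append K [a]] at huw
      have h := lex_strip huw
      rw [key_short [a] (by simp), key_short [a, x] (by simp)] at h
      have hlt := lex_singleton_inv h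
      rcases a <;> rcases x <;> simp at hlt
    | [a, b], _ =>
      exfalso
      have hw : unchunk K ++ [a, b] ++ [x] = unchunk K ++ [a, b, x] := by simp
      rw [hw] at huw hvw
      rw [key_unchunk_append K [a,b]] at huv
      rw [key_unchunk_append K [a,b,x]] at hvw
      obtain ⟨τ, rfl⟩ := sand K v (key [a,b]) (key [a,b,x]) huv hvw
      have hτlen : τ.length ≤ 2 := by
        have e1 : (unchunk K ++ [a, b]).length = 3 * K.length + 2 := by
          rw [lenAB]; norm_num
        rw [e1, lenAB K τ] at hc; omega
      rw [key_unchunk_append] at huv hvw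
      have h1 := lex_strip huv
      have h2 := lex_strip hvw
      rw [key_short τ hτlen, key_short [a,b] (by simp)] at h1
      rw [key_short τ hτlen, key_chunk, key_nil] at h2
      have hlow : endS [a, b] < endS τ := lex_singleton_inv h1
      have hhigh : endS τ < thrS a b x := by
        rcases lex_cons_inv h2 with h | ⟨heq, _⟩
        · exact h
        · exact absurd heq (ne_end_thr τ hτlen a b x)
      have hnear := (thr_near a b x).2
      have hmem := endS_mem τ hτlen
      have hab := endS_two a b
      have hnear1 := (thr_near a b x).1
      rcases hab with h'|h'|h'|h' <;> rcases hmem with h|h|h|h|h|h|h <;> omega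
  · -- Case B : u = w ++ [x]
    obtain ⟨K, ρ, rfl, hρ⟩ := exists_decomp w
    subst hu
    match ρ, hρ with
    | [], _ =>
      simp only [List.append_nil] at huv hvw huw hc ⊢
      have hku : key (unchunk K) = K.map thrT ++ [8] := by simpa using key_unchunk_append K []
      rcases x with _ | _
      · exfalso
        rw [key_unchunk_append K [false]] at huv
        rw [hku] at hvw
        obtain ⟨τ, rfl⟩ := sand K v (key [false]) [8] huv hvw
        have hτlen : τ.length ≤ 2 := by
          have e1 : (unchunk K ++ [false]).length = 3 * K.length + 1 := by
            rw [lenAB]; norm_num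
          rw [e1, lenAB K τ] at hc; omega
        rw [key_unchunk_append] at huv hvw
        have h1 := lex_strip huv
        have h2 := lex_strip hvw
        rw [key_short τ hτlen, key_short [false] (by simp)] at h1
        rw [key_short τ hτlen] at h2
        have h7 : 7 < endS τ := by
          have := lex_singleton_inv h1; simpa using this
        have h8 : endS τ < 8 := lex_singleton_inv h2
        omega
      · exfalso
        rw [key_unchunk_append K [true], hku] at huw
        have h := lex_strip huw
        rw [key_short [true] (by simp)] at h
        have h2 := lex_singleton_inv h
        simp at h2
    | [a], _ =>
      have hu' : unchunk K ++ [a] ++ [x] = unchunk K ++ [a, x] := by simp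
      rw [hu'] at huv huw hc
      rw [key_unchunk_append K [a,x]] at huv huw
      rw [key_unchunk_append K [a]] at hvw huw
      obtain ⟨τ, rfl⟩ := sand K v (key [a,x]) (key [a]) huv hvw
      have hτlen : τ.length ≤ 2 := by
        have e1 : (unchunk K ++ [a, x]).length = 3 * K.length + 2 := by
          rw [lenAB]; norm_num
        rw [e1, lenAB K τ] at hc; omega
      rw [key_unchunk_append] at huv hvw
      have h1 := lex_strip huv
      have h2 := lex_strip hvw
      rw [key_short τ hτlen] at h1 h2
      rw [key_short [a,x] (by simp)] at h1
      rw [key_short [a] (by simp)] at h2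
      have hlow : endS [a, x] < endS τ := lex_singleton_inv h1
      have hhigh : endS τ < endS [a] := lex_singleton_inv h2
      have hmem := endS_mem τ hτlen
      rcases a <;> rcases x <;>
        simp only [endS_f, endS_t, endS_ff, endS_ft, endS_tf, endS_tt] at hlow hhigh
      · -- a = false, x = false : 1 < e < 7 : e = 4
        have h4 : endS τ = 4 := by rcases hmem with h|h|h|h|h|h|h <;> omega
        have hτ : τ = [false, true] := end_inj hτlen (by simp) (by rw [h4]; rfl)
        subst hτ
        exact Or.inr ⟨true, by simp⟩
      · exfalso; rcases hmem with h|h|h|h|h|h|h <;> omega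
      · -- a = true, x = false : 9 < e < 15 : e = 12
        have h12 : endS τ = 12 := by rcases hmem with h|h|h|h|h|h|h <;> omega
        have hτ : τ = [true, true] := end_inj hτlen (by simp) (by rw [h12]; rfl)
        subst hτ
        exact Or.inr ⟨true, by simp⟩
      · exfalso; rcases hmem with h|h|h|h|h|h|h <;> omega
    | [a, b], _ =>
      exfalso
      have hu' : unchunk K ++ [a, b] ++ [x] = unchunk K ++ [a, b, x] := by simp
      rw [hu'] at huw
      rw [key_unchunk_append K [a,b,x], key_unchunk_append K [a,b]] at huw
      have h := lex_strip huw
      rw [key_chunk, key_nil, key_short [a,b] (by simp)] at h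
      rcases lex_cons_inv h with h' | ⟨heq, h'⟩
      · have := (thr_near a b x).1
        omega
      · exact ne_end_thr [a,b] (by simp) a b x heq.symm



abbrev BTv (h : ℕ) := {l : List Bool // l.length ≤ h}

def mG (h : ℕ) : SimpleGraph (BTv h) where
  Adj a b := adjL a.1 b.1
  symm := by refine ⟨?_⟩; rintro a b (⟨c, hc⟩ | ⟨c, hc⟩)
             · exact Or.inr ⟨c, hc⟩
             · exact Or.inl ⟨c, hc⟩
  loopless := by refine ⟨?_⟩; rintro a (⟨c, hc⟩ | ⟨c, hc⟩) <;>
                 · have := congrArg List.length hc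
                   simp at this

section Lower

variable {h : ℕ}

def Dset (h : ℕ) (p : List Bool) : Set (BTv h) := {v | p <+: v.1}

lemma Dset_mono {p q : List Bool} (hpq : p <+: q) : Dset h q ⊆ Dset h p :=
  fun _ hv => hpq.trans hv

lemma adj_into {p : List Bool} {z x : BTv h} (hadj : (mG h).Adj z x)
    (hx : p <+: x.1) (hz : ¬ p <+: z.1) : ∃ c, z.1 ++ [c] = p ∧ x.1 = p := by
  rcases hadj with ⟨c, hc⟩ | ⟨c, hc⟩
  · -- x.1 = z.1 ++ [c]
    rw [hc] at hx
    rcases Nat.lt_or_ge z.1.length p.length with hlen | hlen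
    · -- p has full length : p = z.1 ++ [c]
      have hple : p.length ≤ z.1.length + 1 := by
        have := hx.length_le; simpa using this
      have : p = z.1 ++ [c] := hx.eq_of_length (by simp; omega)
      exact ⟨c, this.symm, by rw [hc, this]⟩
    · -- p would be a prefix of z.1
      exfalso
      apply hz
      have : p = (z.1 ++ [c]).take p.length := List.prefix_iff_eq_take.mp hx
      rw [List.take_append_of_le_length hlen] at this
      rw [this]
      exact List.take_prefix _ _
  · -- z.1 = x.1 ++ [c]
    exfalso
    exact hz (hc ▸ hx.trans (List.prefix_append x.1 [c]))

lemma walk_down {p : List Bool} (hp : p.length ≤ h) :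
    ∀ (t : List Bool) (v : BTv h), p ++ t = v.1 →
      ∃ w : (mG h).Walk v ⟨p, hp⟩, ∀ x ∈ w.support, p <+: x.1 := by
  intro t
  induction t using List.reverseRecOn with
  | nil =>
    intro v hv
    have hv' : v = ⟨p, hp⟩ := Subtype.ext (by rw [← hv]; simp)
    subst hv'
    exact ⟨SimpleGraph.Walk.nil, by simp⟩
  | append_singleton t c ih =>
    intro v hv
    have hv2 : (p ++ t).length ≤ h := by
      have := v.2; rw [← hv] at this; simp at this ⊢; omega
    obtain ⟨w', hw'⟩ := ih ⟨p ++ t, hv2⟩ rfl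
    have hadj : (mG h).Adj v ⟨p ++ t, hv2⟩ := by
      refine Or.inr ⟨c, ?_⟩
      rw [← hv]; simp
    refine ⟨SimpleGraph.Walk.cons hadj w', ?_⟩
    intro x hx
    rw [SimpleGraph.Walk.support_cons] at hx
    rcases List.mem_cons.mp hx with rfl | hx
    · rw [← hv]; exact ⟨t ++ [c], by simp⟩
    · exact hw' x hx

lemma exists_walk_trans {Z : Set (BTv h)} {a b c : BTv h}
    (w1 : ∃ w : (mG h).Walk a b, ∀ x ∈ w.support, x ∈ Z)
    (w2 : ∃ w : (mG h).Walk b c, ∀ x ∈ w.support, x ∈ Z) :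
    ∃ w : (mG h).Walk a c, ∀ x ∈ w.support, x ∈ Z := by
  obtain ⟨w1, h1⟩ := w1
  obtain ⟨w2, h2⟩ := w2
  refine ⟨w1.append w2, ?_⟩
  intro x hx
  rcases (SimpleGraph.Walk.mem_support_append_iff _ _).mp hx with hx | hx
  · exact h1 x hx
  · exact h2 x hx

lemma exists_walk_rev {Z : Set (BTv h)} {a b : BTv h}
    (w1 : ∃ w : (mG h).Walk a b, ∀ x ∈ w.support, x ∈ Z) :
    ∃ w : (mG h).Walk b a, ∀ x ∈ w.support, x ∈ Z := by
  obtain ⟨w, hw⟩ := w1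
  refine ⟨w.reverse, ?_⟩
  intro x hx
  rw [SimpleGraph.Walk.support_reverse] at hx
  exact hw x (List.mem_reverse.mp hx)

lemma exists_walk_single {Z : Set (BTv h)} {a b : BTv h} (hadj : (mG h).Adj a b)
    (ha : a ∈ Z) (hb : b ∈ Z) :
    ∃ w : (mG h).Walk a b, ∀ x ∈ w.support, x ∈ Z := by
  refine ⟨SimpleGraph.Walk.cons hadj SimpleGraph.Walk.nil, ?_⟩
  intro x hx
  simp at hx
  rcases hx with rfl | rfl
  · exact ha
  · exact hb

variable (r : BTv h → BTv h → Prop) [IsStrictTotalOrder (BTv h) r]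

lemma cut {m : BTv h} :
    ∀ {a b : BTv h} (w : (mG h).Walk a b), r a m → r m b → (∀ x ∈ w.support, x ≠ m) →
      ∃ z x, (mG h).Adj z x ∧ z ∈ w.support ∧ x ∈ w.support ∧ r z m ∧ r m x := by
  intro a b w
  induction w with
  | nil =>
    intro h1 h2 _
    exact absurd (_root_.trans h1 h2) (irrefl_of r _)
  | @cons a c b hadj w' ih =>
    intro h1 h2 hsup
    have hc : c ≠ m := hsup c (by simp)
    rcases trichotomous_of r c m with hcm | rfl | hmc
    · obtain ⟨z, x, hzx, hz, hx, hzm, hmx⟩ := ih hcm h2 (fun x hx => hsup x (by simp [hx]))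
      exact ⟨z, x, hzx, by simp [hz], by simp [hx], hzm, hmx⟩
    · exact absurd rfl hc
    · exact ⟨a, c, hadj, by simp, by simp, h1, hmc⟩

def Rel (D : Set (BTv h)) (a b : BTv h) : Prop :=
  r a b ∧ ∃ w, w ∈ D ∧ r b w ∧ (mG h).Adj a w ∧ ¬ (mG h).Adj b w

def IsChn (D : Set (BTv h)) (ys : List (BTv h)) : Prop :=
  (∀ y ∈ ys, y ∈ D) ∧ ys.Pairwise (Rel r D)

lemma Rel_mono {D E : Set (BTv h)} (hDE : D ⊆ E) {a b : BTv h} (hab : Rel r D a b) :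
    Rel r E a b := by
  obtain ⟨h1, w, hw, h2, h3, h4⟩ := hab
  exact ⟨h1, w, hDE hw, h2, h3, h4⟩

lemma pairwise_last {α : Type*} {R : α → α → Prop} :
    ∀ {ys : List α} {e : α}, ys.getLast? = some e → ys.Pairwise R →
      ∀ q ∈ ys, q = e ∨ R q e := by
  intro ys
  induction ys with
  | nil => intro e he; simp at he
  | cons y ys ih =>
    intro e he hp q hq
    match ys, he with
    | [], he =>
      simp at he hq
      subst he; subst hq; exact Or.inl rfl
    | y' :: ys', he =>
      rw [List.getLast?_cons_cons] at he
      have hemem : e ∈ y' :: ys' := List.mem_of_getLast? he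
      rcases List.mem_cons.mp hq with rfl | hq'
      · exact Or.inr ((List.pairwise_cons.mp hp).1 e hemem)
      · exact ih he (List.pairwise_cons.mp hp).2 q hq'

lemma chain_insert {D E : Set (BTv h)} (hDE : D ⊆ E) {z w e : BTv h}
    (hzE : z ∈ E) (hzD : z ∉ D)
    (hzadj : ∀ x ∈ D, ¬ (mG h).Adj z x)
    (hwadj : ∀ x ∈ D, ¬ (mG h).Adj w x)
    (hwE : w ∈ E) (hzw : (mG h).Adj z w)
    (hze : r z e) (hew : r e w) :
    ∀ (ys : List (BTv h)), IsChn r D ys → ys.getLast? = some e →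
      ∃ ys', IsChn r E ys' ∧ ys'.length = ys.length + 1 ∧ ∀ q ∈ ys', q ∈ ys ∨ q = z := by
  intro ys
  induction ys with
  | nil => intro _ hlast; simp at hlast
  | cons y ys ih =>
    intro hch hlast
    obtain ⟨hmem, hpw⟩ := hch
    have hyD : y ∈ D := hmem y (by simp)
    rcases trichotomous_of r z y with hzy | rfl | hyz'
    · -- prepend z
      refine ⟨z :: y :: ys, ⟨?_, ?_⟩, by simp, ?_⟩
      · intro q hq
        rcases List.mem_cons.mp hq with rfl | hq
        · exact hzE
        · exact hDE (hmem q hq)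
      · rw [List.pairwise_cons]
        constructor
        · intro q hq
          have hqD : q ∈ D := hmem q hq
          have hqe : q = e ∨ Rel r D q e := pairwise_last hlast hpw q hq
          have hrzq : r z q := by
            rcases List.mem_cons.mp hq with rfl | hq'
            · exact hzy
            · exact _root_.trans hzy ((List.pairwise_cons.mp hpw).1 q hq').1
          refine ⟨hrzq, w, hwE, ?_, hzw, fun hqw => hwadj q hqD hqw.symm⟩
          rcases hqe with rfl | ⟨h1, _⟩
          · exact hew
          · exact _root_.trans h1 hew
        · exact hpw.imp (Rel_mono r hDE)
      · intro q hq
        rcases List.mem_cons.mp hq with rfl | hq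
        · exact Or.inr rfl
        · exact Or.inl hq
    · exact absurd hyD hzD
    · -- y ≺ z : insert into the tail
      match ys, hlast, hpw, hmem with
      | [], hlast, _, _ =>
        simp at hlast
        subst hlast
        exact absurd hze (asymm hyz')
      | y' :: ys', hlast, hpw, hmem =>
        rw [List.getLast?_cons_cons] at hlast
        obtain ⟨ys'', hch'', hlen'', hmem''⟩ :=
          ih ⟨fun q hq => hmem q (by simp [hq]), (List.pairwise_cons.mp hpw).2⟩ hlast
        refine ⟨y :: ys'', ⟨?_, ?_⟩, by simp only [List.length_cons] at hlen'' ⊢; omega, ?_⟩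
        · intro q hq
          rcases List.mem_cons.mp hq with rfl | hq
          · exact hDE hyD
          · exact hch''.1 q hq
        · rw [List.pairwise_cons]
          refine ⟨?_, hch''.2⟩
          intro q hq
          rcases hmem'' q hq with hq' | rfl
          · exact Rel_mono r hDE ((List.pairwise_cons.mp hpw).1 q hq')
          · have hye : Rel r D y e :=
              (List.pairwise_cons.mp hpw).1 e (List.mem_of_getLast? hlast)
            obtain ⟨_, w', hw'D, hew', hyw', _⟩ := hye
            exact ⟨hyz', w', hDE hw'D, _root_.trans hze hew', hyw', hzadj w' hw'D⟩
        · intro q hq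
          rcases List.mem_cons.mp hq with rfl | hq
          · exact Or.inl (by simp)
          · rcases hmem'' q hq with hq' | rfl
            · exact Or.inl (by simp [hq'])
            · exact Or.inr rfl

/-- One branch step : either we can extend the chain, or the whole `Z` lies on one
side of `e`. -/
lemma branch_step {p pa : List Bool} (hpa : p <+: pa) {Z : Set (BTv h)}
    (hZsub : Z ⊆ Dset h p)
    (hZP : ∀ z ∈ Z, ¬ pa <+: z.1)
    (hZQ : ∀ z ∈ Z, ∀ c, z.1 ++ [c] ≠ pa)
    (hconn : ∀ z1 ∈ Z, ∀ z2 ∈ Z, ∃ w : (mG h).Walk z1 z2, ∀ x ∈ w.support, x ∈ Z)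
    {ys : List (BTv h)} {e : BTv h} (hch : IsChn r (Dset h pa) ys)
    (hlast : ys.getLast? = some e) :
    (∃ ys', IsChn r (Dset h p) ys' ∧ ys'.length = ys.length + 1) ∨
      (∀ z ∈ Z, r z e) ∨ (∀ z ∈ Z, r e z) := by
  have heD : e ∈ Dset h pa := hch.1 e (List.mem_of_getLast? hlast)
  have heZ : e ∉ Z := fun hz => hZP e hz heD
  have hNa : ∀ z ∈ Z, ∀ x ∈ Dset h pa, ¬ (mG h).Adj z x := by
    intro z hz x hx hadj
    obtain ⟨c, hc1, _⟩ := adj_into hadj hx (hZP z hz)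
    exact hZQ z hz c hc1
  by_cases h1 : ∃ z ∈ Z, r z e
  · by_cases h2 : ∃ z ∈ Z, r e z
    · obtain ⟨z0, hz0, hz0e⟩ := h1
      obtain ⟨w0, hw0, hew0⟩ := h2
      obtain ⟨W, hW⟩ := hconn z0 hz0 w0 hw0
      obtain ⟨z, x, hzx, hzW, hxW, hze, hex⟩ :=
        cut r W hz0e hew0 (fun x hx hxe => heZ (hxe ▸ hW x hx))
      left
      exact
        (chain_insert r (Dset_mono hpa) (hZsub (hW z hzW)) (fun hzD => hZP z (hW z hzW) hzD)
          (hNa z (hW z hzW)) (hNa x (hW x hxW)) (hZsub (hW x hxW)) hzx hze hex ys hch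
          hlast).imp (fun ys' ⟨a, b, _⟩ => ⟨a, b⟩)
    · right; left
      intro z hz
      push_neg at h2
      rcases trichotomous_of r z e with h | h | h
      · exact h
      · subst h; exact absurd hz heZ
      · exact absurd h (h2 z hz)
  · right; right
    intro z hz
    push_neg at h1
    rcases trichotomous_of r e z with h | h | h
    · exact h
    · have h' : z = e := h.symm
      subst h'; exact absurd hz heZ
    · exact absurd h (h1 z hz)

lemma not_pref_pair {p s t : List Bool} (hst : ¬ s <+: t) : ¬ (p ++ s) <+: (p ++ t) := by
  rw [List.prefix_append_right_inj]; exact hst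

lemma mem_D_not_pref {q s : List Bool} {z : List Bool} (hz : q <+: z)
    (hns : ¬ s <+: q) (hlen : s.length ≤ q.length) : ¬ s <+: z := by
  intro hsz
  exact hns (List.prefix_of_prefix_length_le hsz hz hlen)

lemma mem_D_not_parent {q z : List Bool} (hz : q <+: z) {s : List Bool}
    (hlen : s.length ≤ q.length) : ∀ c, z ++ [c] ≠ s := by
  intro c hc
  have h1 : q.length ≤ z.length := hz.length_le
  have := congrArg List.length hc
  simp at this
  omega

lemma not_parent_pair {p s t : List Bool} (hst : ∀ c : Bool, t ++ [c] ≠ s) :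
    ∀ c, (p ++ t) ++ [c] ≠ p ++ s := by
  intro c hc
  rw [List.append_assoc] at hc
  exact hst c (List.append_cancel_left hc)

theorem model_lower (h : ℕ) (r : BTv h → BTv h → Prop) [IsStrictTotalOrder (BTv h) r] :
    ∀ (j : ℕ) (p : List Bool), p.length + 3 * j ≤ h →
      ∃ ys, IsChn r (Dset h p) ys ∧ ys.length = j + 1 := by
  intro j
  induction j with
  | zero =>
    intro p hp
    refine ⟨[⟨p, by omega⟩], ⟨?_, by simp⟩, rfl⟩
    intro y hy
    simp at hy
    subst hy
    exact List.prefix_rfl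
  | succ j ih =>
    intro p hp
    -- the three dangling subtrees
    have hp1 : (p ++ [true]).length + 3 * j ≤ h := by simp; omega
    have hp2 : (p ++ [false, false, false]).length + 3 * j ≤ h := by simp; omega
    have hp3 : (p ++ [false, true, false]).length + 3 * j ≤ h := by simp; omega
    obtain ⟨ys1, hch1, hlen1⟩ := ih (p ++ [true]) hp1
    obtain ⟨ys2, hch2, hlen2⟩ := ih (p ++ [false, false, false]) hp2
    obtain ⟨ys3, hch3, hlen3⟩ := ih (p ++ [false, true, false]) hp3
    have h1ne : ys1 ≠ [] := by intro hh; rw [hh] at hlen1; simp at hlen1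
    have h2ne : ys2 ≠ [] := by intro hh; rw [hh] at hlen2; simp at hlen2
    have h3ne : ys3 ≠ [] := by intro hh; rw [hh] at hlen3; simp at hlen3
    set e1 := ys1.getLast h1ne with he1
    set e2 := ys2.getLast h2ne with he2
    set e3 := ys3.getLast h3ne with he3
    have hlast1 : ys1.getLast? = some e1 := List.getLast?_eq_getLast h1ne
    have hlast2 : ys2.getLast? = some e2 := List.getLast?_eq_getLast h2ne
    have hlast3 : ys3.getLast? = some e3 := List.getLast?_eq_getLast h3ne
    have he1D : (p ++ [true]) <+: e1.1 := hch1.1 e1 (List.getLast_mem h1ne)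
    have he2D : (p ++ [false, false, false]) <+: e2.1 := hch2.1 e2 (List.getLast_mem h2ne)
    have he3D : (p ++ [false, true, false]) <+: e3.1 := hch3.1 e3 (List.getLast_mem h3ne)
    -- the three connected "rest" sets
    set Z1 : Set (BTv h) := {v | v.1 = p ++ [false] ∨ v.1 = p ++ [false, false] ∨
      v.1 = p ++ [false, true] ∨ (p ++ [false, false, false]) <+: v.1 ∨
      (p ++ [false, true, false]) <+: v.1} with hZ1def
    set Z2 : Set (BTv h) := {v | v.1 = p ∨ v.1 = p ++ [false] ∨
      v.1 = p ++ [false, true] ∨ (p ++ [true]) <+: v.1 ∨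
      (p ++ [false, true, false]) <+: v.1} with hZ2def
    set Z3 : Set (BTv h) := {v | v.1 = p ∨ v.1 = p ++ [false] ∨
      v.1 = p ++ [false, false] ∨ (p ++ [true]) <+: v.1 ∨
      (p ++ [false, false, false]) <+: v.1} with hZ3def
    -- basic vertices
    have lP : p.length ≤ h := by omega
    have lxL : (p ++ [false]).length ≤ h := by simp; omega
    have lxLL : (p ++ [false, false]).length ≤ h := by simp; omega
    have lxLR : (p ++ [false, true]).length ≤ h := by simp; omega
    have lxR : (p ++ [true]).length ≤ h := by simp; omega
    have lxLLL : (p ++ [false, false, false]).length ≤ h := by simp; omega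
    have lxLRL : (p ++ [false, true, false]).length ≤ h := by simp; omega
    -- subset facts
    have hZ1sub : Z1 ⊆ Dset h p := by
      intro z hz
      rcases hz with hz | hz | hz | hz | hz
      · exact ⟨_, hz.symm⟩
      · exact ⟨_, hz.symm⟩
      · exact ⟨_, hz.symm⟩
      · exact (List.prefix_append _ _).trans hz
      · exact (List.prefix_append _ _).trans hz
    have hZ2sub : Z2 ⊆ Dset h p := by
      intro z hz
      rcases hz with hz | hz | hz | hz | hz
      · exact ⟨[], by simp [hz]⟩
      · exact ⟨_, hz.symm⟩
      · exact ⟨_, hz.symm⟩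
      · exact (List.prefix_append _ _).trans hz
      · exact (List.prefix_append _ _).trans hz
    have hZ3sub : Z3 ⊆ Dset h p := by
      intro z hz
      rcases hz with hz | hz | hz | hz | hz
      · exact ⟨[], by simp [hz]⟩
      · exact ⟨_, hz.symm⟩
      · exact ⟨_, hz.symm⟩
      · exact (List.prefix_append _ _).trans hz
      · exact (List.prefix_append _ _).trans hz
    -- P facts : Z_a avoids the dangling subtree D_a
    have hZ1P : ∀ z ∈ Z1, ¬ (p ++ [true]) <+: z.1 := by
      intro z hz
      rcases hz with hz | hz | hz | hz | hz
      · rw [hz]; exact not_pref_pair (by decide)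
      · rw [hz]; exact not_pref_pair (by decide)
      · rw [hz]; exact not_pref_pair (by decide)
      · exact mem_D_not_pref hz (not_pref_pair (by decide)) (by simp)
      · exact mem_D_not_pref hz (not_pref_pair (by decide)) (by simp)
    have hZ2P : ∀ z ∈ Z2, ¬ (p ++ [false, false, false]) <+: z.1 := by
      intro z hz
      rcases hz with hz | hz | hz | hz | hz
      · rw [hz]; intro hcon
        have := hcon.length_le; simp at this
      · rw [hz]; exact not_pref_pair (by decide)
      · rw [hz]; exact not_pref_pair (by decide)
      · exact fun hcon =>
          (not_pref_pair (p := p) (by decide : ¬ ([true] : List Bool) <+: [false,false,false]))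
            (List.prefix_of_prefix_length_le hz hcon (by simp))
      · exact mem_D_not_pref hz (not_pref_pair (by decide)) (by simp)
    have hZ3P : ∀ z ∈ Z3, ¬ (p ++ [false, true, false]) <+: z.1 := by
      intro z hz
      rcases hz with hz | hz | hz | hz | hz
      · rw [hz]; intro hcon
        have := hcon.length_le; simp at this
      · rw [hz]; exact not_pref_pair (by decide)
      · rw [hz]; exact not_pref_pair (by decide)
      · exact fun hcon =>
          (not_pref_pair (p := p) (by decide : ¬ ([true] : List Bool) <+: [false,true,false]))
            (List.prefix_of_prefix_length_le hz hcon (by simp))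
      · exact fun hcon =>
          (not_pref_pair (p := p)
            (by decide : ¬ ([false,false,false] : List Bool) <+: [false,true,false]))
            (List.prefix_of_prefix_length_le hz hcon (by simp))
    -- Q facts : Z_a avoids the parent of the root of D_a
    have hZ1Q : ∀ z ∈ Z1, ∀ c, z.1 ++ [c] ≠ p ++ [true] := by
      intro z hz
      rcases hz with hz | hz | hz | hz | hz
      · rw [hz]; exact not_parent_pair (by decide)
      · rw [hz]; exact not_parent_pair (by decide)
      · rw [hz]; exact not_parent_pair (by decide)
      · exact mem_D_not_parent hz (by simp)
      · exact mem_D_not_parent hz (by simp)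
    have hZ2Q : ∀ z ∈ Z2, ∀ c, z.1 ++ [c] ≠ p ++ [false, false, false] := by
      intro z hz
      rcases hz with hz | hz | hz | hz | hz
      · rw [hz]; intro c hc
        have := congrArg List.length hc; simp at this
      · rw [hz]; exact not_parent_pair (by decide)
      · rw [hz]; exact not_parent_pair (by decide)
      · intro c hc
        have h2 : (p ++ [true]) <+: z.1 ++ [c] := hz.trans (List.prefix_append _ _)
        rw [hc] at h2
        exact not_pref_pair (by decide) h2
      · exact mem_D_not_parent hz (by simp)
    have hZ3Q : ∀ z ∈ Z3, ∀ c, z.1 ++ [c] ≠ p ++ [false, true, false] := by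
      intro z hz
      rcases hz with hz | hz | hz | hz | hz
      · rw [hz]; intro c hc
        have := congrArg List.length hc; simp at this
      · rw [hz]; exact not_parent_pair (by decide)
      · rw [hz]; exact not_parent_pair (by decide)
      · intro c hc
        have h2 : (p ++ [true]) <+: z.1 ++ [c] := hz.trans (List.prefix_append _ _)
        rw [hc] at h2
        exact not_pref_pair (by decide) h2
      · exact mem_D_not_parent hz (by simp)
    -- hub walks for Z1 (hub = p ++ [false])
    have hxLZ1 : (⟨p ++ [false], lxL⟩ : BTv h) ∈ Z1 := Or.inl rfl
    have hxLLZ1 : (⟨p ++ [false, false], lxLL⟩ : BTv h) ∈ Z1 := Or.inr (Or.inl rfl)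
    have hxLRZ1 : (⟨p ++ [false, true], lxLR⟩ : BTv h) ∈ Z1 := Or.inr (Or.inr (Or.inl rfl))
    have hxLLLZ1 : (⟨p ++ [false, false, false], lxLLL⟩ : BTv h) ∈ Z1 :=
      Or.inr (Or.inr (Or.inr (Or.inl List.prefix_rfl)))
    have hxLRLZ1 : (⟨p ++ [false, true, false], lxLRL⟩ : BTv h) ∈ Z1 :=
      Or.inr (Or.inr (Or.inr (Or.inr List.prefix_rfl)))
    have hubZ1 : ∀ z ∈ Z1, ∃ w : (mG h).Walk z ⟨p ++ [false], lxL⟩,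
        ∀ x ∈ w.support, x ∈ Z1 := by
      intro z hz
      rcases hz with hz | hz | hz | hz | hz
      · have hzeq : z = ⟨p ++ [false], lxL⟩ := Subtype.ext hz
        subst hzeq
        exact ⟨SimpleGraph.Walk.nil, by intro x hx; simp at hx; subst hx; exact hxLZ1⟩
      · exact exists_walk_single (Or.inr ⟨false, by rw [hz]; simp⟩)
          (Or.inr (Or.inl hz)) hxLZ1
      · exact exists_walk_single (Or.inr ⟨true, by rw [hz]; simp⟩)
          (Or.inr (Or.inr (Or.inl hz))) hxLZ1
      · obtain ⟨t, ht⟩ := hz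
        obtain ⟨w1, hw1⟩ := walk_down lxLLL t z ht
        refine exists_walk_trans
          ⟨w1, fun x hx => Or.inr (Or.inr (Or.inr (Or.inl (hw1 x hx))))⟩
          (exists_walk_trans
            (exists_walk_single (Or.inr ⟨false, by simp⟩) hxLLLZ1 hxLLZ1)
            (exists_walk_single (Or.inr ⟨false, by simp⟩) hxLLZ1 hxLZ1))
      · obtain ⟨t, ht⟩ := hz
        obtain ⟨w1, hw1⟩ := walk_down lxLRL t z ht
        refine exists_walk_trans
          ⟨w1, fun x hx => Or.inr (Or.inr (Or.inr (Or.inr (hw1 x hx))))⟩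
          (exists_walk_trans
            (exists_walk_single (Or.inr ⟨false, by simp⟩) hxLRLZ1 hxLRZ1)
            (exists_walk_single (Or.inr ⟨true, by simp⟩) hxLRZ1 hxLZ1))
    -- hub walks for Z2 (hub = p)
    have hpZ2 : (⟨p, lP⟩ : BTv h) ∈ Z2 := Or.inl rfl
    have hxLZ2 : (⟨p ++ [false], lxL⟩ : BTv h) ∈ Z2 := Or.inr (Or.inl rfl)
    have hxLRZ2 : (⟨p ++ [false, true], lxLR⟩ : BTv h) ∈ Z2 := Or.inr (Or.inr (Or.inl rfl))
    have hxRZ2 : (⟨p ++ [true], lxR⟩ : BTv h) ∈ Z2 :=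
      Or.inr (Or.inr (Or.inr (Or.inl List.prefix_rfl)))
    have hxLRLZ2 : (⟨p ++ [false, true, false], lxLRL⟩ : BTv h) ∈ Z2 :=
      Or.inr (Or.inr (Or.inr (Or.inr List.prefix_rfl)))
    have hubZ2 : ∀ z ∈ Z2, ∃ w : (mG h).Walk z ⟨p, lP⟩, ∀ x ∈ w.support, x ∈ Z2 := by
      intro z hz
      rcases hz with hz | hz | hz | hz | hz
      · have hzeq : z = ⟨p, lP⟩ := Subtype.ext hz
        subst hzeq
        exact ⟨SimpleGraph.Walk.nil, by intro x hx; simp at hx; subst hx; exact hpZ2⟩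
      · exact exists_walk_single (Or.inr ⟨false, by rw [hz]⟩) (Or.inr (Or.inl hz)) hpZ2
      · exact exists_walk_trans
          (exists_walk_single (Or.inr ⟨true, by rw [hz]; simp⟩)
            (Or.inr (Or.inr (Or.inl hz))) hxLZ2)
          (exists_walk_single (Or.inr ⟨false, by simp⟩) hxLZ2 hpZ2)
      · obtain ⟨t, ht⟩ := hz
        obtain ⟨w1, hw1⟩ := walk_down lxR t z ht
        refine exists_walk_trans
          ⟨w1, fun x hx => Or.inr (Or.inr (Or.inr (Or.inl (hw1 x hx))))⟩
          (exists_walk_single (Or.inr ⟨true, by simp⟩) hxRZ2 hpZ2)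
      · obtain ⟨t, ht⟩ := hz
        obtain ⟨w1, hw1⟩ := walk_down lxLRL t z ht
        refine exists_walk_trans
          ⟨w1, fun x hx => Or.inr (Or.inr (Or.inr (Or.inr (hw1 x hx))))⟩
          (exists_walk_trans
            (exists_walk_single (Or.inr ⟨false, by simp⟩) hxLRLZ2 hxLRZ2)
            (exists_walk_trans
              (exists_walk_single (Or.inr ⟨true, by simp⟩) hxLRZ2 hxLZ2)
              (exists_walk_single (Or.inr ⟨false, by simp⟩) hxLZ2 hpZ2)))
    -- hub walks for Z3 (hub = p)
    have hpZ3 : (⟨p, lP⟩ : BTv h) ∈ Z3 := Or.inl rfl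
    have hxLZ3 : (⟨p ++ [false], lxL⟩ : BTv h) ∈ Z3 := Or.inr (Or.inl rfl)
    have hxLLZ3 : (⟨p ++ [false, false], lxLL⟩ : BTv h) ∈ Z3 := Or.inr (Or.inr (Or.inl rfl))
    have hxRZ3 : (⟨p ++ [true], lxR⟩ : BTv h) ∈ Z3 :=
      Or.inr (Or.inr (Or.inr (Or.inl List.prefix_rfl)))
    have hxLLLZ3 : (⟨p ++ [false, false, false], lxLLL⟩ : BTv h) ∈ Z3 :=
      Or.inr (Or.inr (Or.inr (Or.inr List.prefix_rfl)))
    have hubZ3 : ∀ z ∈ Z3, ∃ w : (mG h).Walk z ⟨p, lP⟩, ∀ x ∈ w.support, x ∈ Z3 := by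
      intro z hz
      rcases hz with hz | hz | hz | hz | hz
      · have hzeq : z = ⟨p, lP⟩ := Subtype.ext hz
        subst hzeq
        exact ⟨SimpleGraph.Walk.nil, by intro x hx; simp at hx; subst hx; exact hpZ3⟩
      · exact exists_walk_single (Or.inr ⟨false, by rw [hz]⟩) (Or.inr (Or.inl hz)) hpZ3
      · exact exists_walk_trans
          (exists_walk_single (Or.inr ⟨false, by rw [hz]; simp⟩)
            (Or.inr (Or.inr (Or.inl hz))) hxLZ3)
          (exists_walk_single (Or.inr ⟨false, by simp⟩) hxLZ3 hpZ3)
      · obtain ⟨t, ht⟩ := hz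
        obtain ⟨w1, hw1⟩ := walk_down lxR t z ht
        refine exists_walk_trans
          ⟨w1, fun x hx => Or.inr (Or.inr (Or.inr (Or.inl (hw1 x hx))))⟩
          (exists_walk_single (Or.inr ⟨true, by simp⟩) hxRZ3 hpZ3)
      · obtain ⟨t, ht⟩ := hz
        obtain ⟨w1, hw1⟩ := walk_down lxLLL t z ht
        refine exists_walk_trans
          ⟨w1, fun x hx => Or.inr (Or.inr (Or.inr (Or.inr (hw1 x hx))))⟩
          (exists_walk_trans
            (exists_walk_single (Or.inr ⟨false, by simp⟩) hxLLLZ3 hxLLZ3)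
            (exists_walk_trans
              (exists_walk_single (Or.inr ⟨false, by simp⟩) hxLLZ3 hxLZ3)
              (exists_walk_single (Or.inr ⟨false, by simp⟩) hxLZ3 hpZ3)))
    have connZ1 : ∀ z1 ∈ Z1, ∀ z2 ∈ Z1, ∃ w : (mG h).Walk z1 z2, ∀ x ∈ w.support, x ∈ Z1 :=
      fun z1 h1 z2 h2 => exists_walk_trans (hubZ1 z1 h1) (exists_walk_rev (hubZ1 z2 h2))
    have connZ2 : ∀ z1 ∈ Z2, ∀ z2 ∈ Z2, ∃ w : (mG h).Walk z1 z2, ∀ x ∈ w.support, x ∈ Z2 :=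
      fun z1 h1 z2 h2 => exists_walk_trans (hubZ2 z1 h1) (exists_walk_rev (hubZ2 z2 h2))
    have connZ3 : ∀ z1 ∈ Z3, ∀ z2 ∈ Z3, ∃ w : (mG h).Walk z1 z2, ∀ x ∈ w.support, x ∈ Z3 :=
      fun z1 h1 z2 h2 => exists_walk_trans (hubZ3 z1 h1) (exists_walk_rev (hubZ3 z2 h2))
    -- apply the branch dichotomy to each of the three branches
    rcases branch_step r (List.prefix_append p [true]) hZ1sub hZ1P hZ1Q connZ1 hch1 hlast1 with
      ⟨ys', hch', hlen'⟩ | hside1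
    · exact ⟨ys', hch', by rw [hlen', hlen1]⟩
    rcases branch_step r (List.prefix_append p [false, false, false]) hZ2sub hZ2P hZ2Q connZ2
        hch2 hlast2 with ⟨ys', hch', hlen'⟩ | hside2
    · exact ⟨ys', hch', by rw [hlen', hlen2]⟩
    rcases branch_step r (List.prefix_append p [false, true, false]) hZ3sub hZ3P hZ3Q connZ3
        hch3 hlast3 with ⟨ys', hch', hlen'⟩ | hside3
    · exact ⟨ys', hch', by rw [hlen', hlen3]⟩
    -- pigeonhole on the three sides
    exfalso
    have he2Z1 : e2 ∈ Z1 := Or.inr (Or.inr (Or.inr (Or.inl he2D)))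
    have he3Z1 : e3 ∈ Z1 := Or.inr (Or.inr (Or.inr (Or.inr he3D)))
    have he1Z2 : e1 ∈ Z2 := Or.inr (Or.inr (Or.inr (Or.inl he1D)))
    have he3Z2 : e3 ∈ Z2 := Or.inr (Or.inr (Or.inr (Or.inr he3D)))
    have he1Z3 : e1 ∈ Z3 := Or.inr (Or.inr (Or.inr (Or.inl he1D)))
    have he2Z3 : e2 ∈ Z3 := Or.inr (Or.inr (Or.inr (Or.inr he2D)))
    rcases hside1 with s1 | s1 <;> rcases hside2 with s2 | s2 <;> rcases hside3 with s3 | s3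
    · exact absurd (_root_.trans (s1 e2 he2Z1) (s2 e1 he1Z2)) (irrefl_of r _)
    · exact absurd (_root_.trans (s1 e2 he2Z1) (s2 e1 he1Z2)) (irrefl_of r _)
    · exact absurd (_root_.trans (s1 e3 he3Z1) (s3 e1 he1Z3)) (irrefl_of r _)
    · exact absurd (_root_.trans (s2 e3 he3Z2) (s3 e2 he2Z3)) (irrefl_of r _)
    · exact absurd (_root_.trans (s2 e3 he3Z2) (s3 e2 he2Z3)) (irrefl_of r _)
    · exact absurd (_root_.trans (s1 e3 he3Z1) (s3 e1 he1Z3)) (irrefl_of r _)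
    · exact absurd (_root_.trans (s1 e2 he2Z1) (s2 e1 he1Z2)) (irrefl_of r _)
    · exact absurd (_root_.trans (s1 e2 he2Z1) (s2 e1 he1Z2)) (irrefl_of r _)

end Lower


lemma key_inj : ∀ u v : List Bool, key u = key v → u = v := by
  intro u
  induction u using key.induct with
  | case1 a b c t ih =>
    intro v h
    match v with
    | x :: y :: z :: s =>
      simp only [key_chunk, List.cons.injEq] at h
      obtain ⟨h1, h2⟩ := h
      obtain ⟨rfl, rfl, rfl⟩ := thr_inj h1
      rw [ih s h2]
    | [] => simp only [key_chunk, key_nil, List.cons.injEq] at h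
            exact absurd h.1.symm (ne_end_thr [] (by simp) a b c)
    | [x] => simp only [key_chunk, key_one, List.cons.injEq] at h
             exact absurd h.1.symm (ne_end_thr [x] (by simp) a b c)
    | [x, y] => simp only [key_chunk, key_two, List.cons.injEq] at h
                exact absurd h.1.symm (ne_end_thr [x, y] (by simp) a b c)
  | case2 l hl =>
    intro v h
    have hlen : l.length ≤ 2 := by
      match l with
      | [] => simp
      | [a] => simp
      | [a, b] => simp
      | a :: b :: c :: t => exact absurd rfl (hl a b c t)
    have hkey : key l = [endS l] := by
      match l with
      | [] => rfl
      | [a] => rfl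
      | [a, b] => rfl
      | a :: b :: c :: t => exact absurd rfl (hl a b c t)
    match v with
    | x :: y :: z :: s =>
      rw [hkey] at h
      simp only [key_chunk, List.cons.injEq] at h
      exact absurd h.1 (ne_end_thr l hlen x y z)
    | [] => rw [hkey] at h; simp at h; exact end_inj hlen (by simp) h
    | [x] => rw [hkey] at h; simp at h; exact end_inj hlen (by simp) h
    | [x, y] => rw [hkey] at h; simp at h; exact end_inj hlen (by simp) h


-- ===================== model graph : upper bound wrap =====================

def rM (h : ℕ) : BTv h → BTv h → Prop := fun a b => LexLt (key a.1) (key b.1)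

lemma rM_STO (h : ℕ) : IsStrictTotalOrder (BTv h) (rM h) where
  trichotomous := by
    intro a b hab hba
    rcases lt_trichotomy (key a.1) (key b.1) with h1 | h1 | h1
    · exact absurd h1 hab
    · exact Subtype.ext (key_inj _ _ h1)
    · exact absurd h1 hba
  irrefl := fun a ha => lt_irrefl (key a.1) ha
  trans := fun a b c h1 h2 => lexlt_trans h1 h2

def cM (h : ℕ) : BTv h → Fin (h / 3 + 1) :=
  fun v => ⟨v.1.length / 3, by have := v.2; omega⟩

theorem model_upper (h : ℕ) : IsKThin (mG h) (h / 3 + 1) := by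
  refine ⟨rM h, rM_STO h, cM h, ?_⟩
  intro u v w r1 r2 hc hadj
  have hc' : u.1.length / 3 = v.1.length / 3 := by
    have := congrArg Fin.val hc
    simpa [cM] using this
  exact consistent_main u.1 v.1 w.1 r1 r2 hc' hadj

-- ===================== model graph : lower bound wrap =====================

theorem model_lower_classes (h k : ℕ) (hk : IsKThin (mG h) k) : h / 3 + 1 ≤ k := by
  obtain ⟨r, hSTO, C, hcons⟩ := hk
  haveI := hSTO
  obtain ⟨ys, hch, hlen⟩ := model_lower h r (h / 3) [] (by simp only [List.length_nil]; omega)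
  -- the colors of the chain are pairwise distinct
  have hpw : ys.Pairwise (fun a b => C a ≠ C b) := by
    refine hch.2.imp ?_
    intro a b hab hCab
    obtain ⟨hrab, w, _, hrbw, hadj, hnadj⟩ := hab
    exact hnadj (hcons a b w hrab hrbw hCab hadj)
  have hnd : (ys.map C).Nodup := by
    refine List.Pairwise.map C ?_ hpw
    intro a b hab
    exact hab
  have hle : (ys.map C).length ≤ Fintype.card (Fin k) := hnd.length_le_card
  simpa [hlen] using hle


section Abstract

variable [Fintype V] {G : SimpleGraph V} {rt : V} {h : ℕ}

/-- On a shortest walk, intermediate vertices are strictly closer to the source. -/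
lemma support_dist_lt {u : V} {p : G.Walk rt u} (hp : p.length = G.dist rt u) {x : V}
    (hx : x ∈ p.support) (hxu : x ≠ u) : G.dist rt x < G.dist rt u := by
  classical
  have hs := p.take_spec hx
  have hlen : (p.takeUntil x hx).length + (p.dropUntil x hx).length = p.length := by
    have := congrArg SimpleGraph.Walk.length hs
    rwa [SimpleGraph.Walk.length_append] at this
  have h1 : G.dist rt x ≤ (p.takeUntil x hx).length := SimpleGraph.dist_le _
  have h2 : (p.dropUntil x hx).length ≠ 0 := fun h0 =>
    hxu (SimpleGraph.Walk.eq_of_length_eq_zero h0)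
  omega

lemma parent_exists (hT : G.IsTree) {v : V} (hv : G.dist rt v ≠ 0) :
    ∃ u, G.Adj u v ∧ G.dist rt u + 1 = G.dist rt v := by
  have hc := hT.isConnected
  obtain ⟨p, hp⟩ := hc.exists_walk_length_eq_dist rt v
  rcases hq : p.reverse with _ | ⟨hadj, q⟩
  · -- p.reverse nil : v = rt
    exfalso
    apply hv
    have : p.reverse.length = 0 := by rw [hq]; rfl
    rw [SimpleGraph.Walk.length_reverse] at this
    omega
  · -- hadj : G.Adj v u, q : G.Walk u rt
    rename_i u
    refine ⟨u, hadj.symm, ?_⟩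
    have hql : q.length + 1 = G.dist rt v := by
      have : p.reverse.length = q.length + 1 := by rw [hq]; simp
      rw [SimpleGraph.Walk.length_reverse] at this
      omega
    have h1 : G.dist rt u ≤ q.length := by
      have := SimpleGraph.dist_le q.reverse
      rwa [SimpleGraph.Walk.length_reverse] at this
    have h2 : G.dist rt v ≤ G.dist rt u + 1 := by
      have htri := hc.dist_triangle (u := rt) (v := u) (w := v)
      have : G.dist u v = 1 := SimpleGraph.dist_eq_one_iff_adj.mpr hadj.symm
      omega
    omega

lemma parent_unique (hT : G.IsTree) {v u₁ u₂ : V}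
    (h1 : G.Adj u₁ v) (hd1 : G.dist rt u₁ + 1 = G.dist rt v)
    (h2 : G.Adj u₂ v) (hd2 : G.dist rt u₂ + 1 = G.dist rt v) : u₁ = u₂ := by
  have hc := hT.isConnected
  -- build the two paths from v to rt through u₁ resp. u₂
  have key : ∀ (u : V), G.Adj u v → G.dist rt u + 1 = G.dist rt v →
      ∃ W : G.Walk v rt, W.IsPath ∧ W.getVert 1 = u := by
    intro u hu hdu
    obtain ⟨p, hp⟩ := hc.exists_walk_length_eq_dist rt u
    have hpath : p.IsPath := SimpleGraph.Walk.isPath_of_length_eq_dist p hp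
    have hvnot : v ∉ p.reverse.support := by
      rw [SimpleGraph.Walk.support_reverse, List.mem_reverse]
      intro hmem
      rcases eq_or_ne v u with rfl | hne
      · exact G.loopless.irrefl v hu
      · have := support_dist_lt hp hmem hne
        omega
    refine ⟨SimpleGraph.Walk.cons hu.symm p.reverse, ?_, ?_⟩
    · rw [SimpleGraph.Walk.cons_isPath_iff]
      exact ⟨hpath.reverse, hvnot⟩
    · rw [SimpleGraph.Walk.getVert_cons_succ, SimpleGraph.Walk.getVert_zero]
  obtain ⟨W1, hW1, hg1⟩ := key u₁ h1 hd1
  obtain ⟨W2, hW2, hg2⟩ := key u₂ h2 hd2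
  have := (hT.existsUnique_path v rt).unique hW1 hW2
  rw [← hg1, ← hg2, this]

lemma adj_dist_succ (hT : G.IsTree) {u v : V} (huv : G.Adj u v) :
    G.dist rt u + 1 = G.dist rt v ∨ G.dist rt v + 1 = G.dist rt u := by
  have hc := hT.isConnected
  have h1 : G.dist rt v ≤ G.dist rt u + 1 := by
    have htri := hc.dist_triangle (u := rt) (v := u) (w := v)
    have : G.dist u v = 1 := SimpleGraph.dist_eq_one_iff_adj.mpr huv
    omega
  have h2 : G.dist rt u ≤ G.dist rt v + 1 := by
    have htri := hc.dist_triangle (u := rt) (v := v) (w := u)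
    have : G.dist v u = 1 := SimpleGraph.dist_eq_one_iff_adj.mpr huv.symm
    omega
  rcases eq_or_ne (G.dist rt u) (G.dist rt v) with heq | hne
  · -- impossible : build two paths of different lengths from v to rt
    exfalso
    have hne0 : G.dist rt u ≠ 0 := by
      intro h0
      have hu : rt = u := (hc.dist_eq_zero_iff).mp h0
      have hv0 : G.dist rt v = 0 := by omega
      have hv : rt = v := (hc.dist_eq_zero_iff).mp hv0
      rw [← hu, ← hv] at huv
      exact G.loopless.irrefl rt huv
    obtain ⟨p, hp⟩ := hc.exists_walk_length_eq_dist rt u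
    have hpath : p.IsPath := SimpleGraph.Walk.isPath_of_length_eq_dist p hp
    have hvnot : v ∉ p.reverse.support := by
      rw [SimpleGraph.Walk.support_reverse, List.mem_reverse]
      intro hmem
      rcases eq_or_ne v u with rfl | hne'
      · exact G.loopless.irrefl v huv
      · have := support_dist_lt hp hmem hne'
        omega
    have hW : (SimpleGraph.Walk.cons huv.symm p.reverse).IsPath := by
      rw [SimpleGraph.Walk.cons_isPath_iff]
      exact ⟨hpath.reverse, hvnot⟩
    obtain ⟨q, hq⟩ := hc.exists_walk_length_eq_dist rt v
    have hqpath : q.IsPath := SimpleGraph.Walk.isPath_of_length_eq_dist q hq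
    have := (hT.existsUnique_path v rt).unique hW hqpath.reverse
    have hlen := congrArg SimpleGraph.Walk.length this
    rw [SimpleGraph.Walk.length_cons, SimpleGraph.Walk.length_reverse,
      SimpleGraph.Walk.length_reverse, hp, hq] at hlen
    omega
  · omega

lemma dist_le_h (hdeg : ∀ v : V, {c | IsChild G rt v c}.ncard = 2 ∨
    ({c | IsChild G rt v c} = ∅ ∧ G.dist rt v = h)) :
    ∀ v, G.dist rt v ≤ h := by
  have hne : (Finset.univ : Finset V).Nonempty := ⟨rt, Finset.mem_univ rt⟩
  obtain ⟨vm, _, hmax⟩ := Finset.exists_max_image Finset.univ (G.dist rt) hne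
  have hempty : {c | IsChild G rt vm c} = ∅ := by
    ext c
    simp only [Set.mem_setOf_eq, Set.mem_empty_iff_false, iff_false]
    rintro ⟨hadj, hdist⟩
    have := hmax c (Finset.mem_univ c)
    omega
  rcases hdeg vm with h2 | ⟨_, hdist⟩
  · rw [hempty] at h2; simp at h2
  · intro v
    have := hmax v (Finset.mem_univ v)
    omega

lemma internal_two (hdeg : ∀ v : V, {c | IsChild G rt v c}.ncard = 2 ∨
    ({c | IsChild G rt v c} = ∅ ∧ G.dist rt v = h)) {v : V} (hv : G.dist rt v < h) :
    {c | IsChild G rt v c}.ncard = 2 := by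
  rcases hdeg v with h2 | ⟨_, hdist⟩
  · exact h2
  · omega

noncomputable def ch (G : SimpleGraph V) (rt : V) (v : V) (c : Bool) : V :=
  if hv : {x | IsChild G rt v x}.ncard = 2 then
    (match c with
      | false => (Set.ncard_eq_two.mp hv).choose
      | true => (Set.ncard_eq_two.mp hv).choose_spec.choose)
  else v

lemma ch_spec {v : V} (hv : {x | IsChild G rt v x}.ncard = 2) :
    ch G rt v false ≠ ch G rt v true ∧
      {x | IsChild G rt v x} = {ch G rt v false, ch G rt v true} := by
  have hspec := (Set.ncard_eq_two.mp hv).choose_spec.choose_spec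
  have hf : ch G rt v false = (Set.ncard_eq_two.mp hv).choose := by
    simp only [ch, dif_pos hv]
  have ht : ch G rt v true = (Set.ncard_eq_two.mp hv).choose_spec.choose := by
    simp only [ch, dif_pos hv]
  rw [hf, ht]
  exact hspec

lemma ch_child {v : V} (hv : {x | IsChild G rt v x}.ncard = 2) (c : Bool) :
    IsChild G rt v (ch G rt v c) := by
  have hmem : ch G rt v c ∈ ({ch G rt v false, ch G rt v true} : Set V) := by
    rcases c
    · exact Or.inl rfl
    · exact Or.inr rfl
  rw [← (ch_spec hv).2] at hmem
  exact hmem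

noncomputable def psi (G : SimpleGraph V) (rt : V) : List Bool → V
  | [] => rt
  | c :: t => ch G rt (psi G rt t) c

variable (hT : G.IsTree) (hdeg : ∀ v : V, {c | IsChild G rt v c}.ncard = 2 ∨
    ({c | IsChild G rt v c} = ∅ ∧ G.dist rt v = h))

include hdeg in
lemma psi_dist : ∀ t : List Bool, t.length ≤ h → G.dist rt (psi G rt t) = t.length := by
  intro t
  induction t with
  | nil => intro _; exact SimpleGraph.dist_self
  | cons c t ih =>
    intro hlen
    simp only [List.length_cons] at hlen
    have ihd := ih (by omega)
    have hv : {x | IsChild G rt (psi G rt t) x}.ncard = 2 :=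
      internal_two hdeg (by omega)
    have hc := ch_child hv c
    have := hc.2
    simp only [psi, List.length_cons]
    omega

include hdeg in
lemma psi_child (c : Bool) (t : List Bool) (hlen : t.length + 1 ≤ h) :
    IsChild G rt (psi G rt t) (psi G rt (c :: t)) := by
  have hv : {x | IsChild G rt (psi G rt t) x}.ncard = 2 := by
    apply internal_two hdeg
    rw [psi_dist hdeg t (by omega)]
    omega
  exact ch_child hv c

include hT hdeg in
lemma psi_inj : ∀ t t' : List Bool, t.length ≤ h → t'.length ≤ h →
    psi G rt t = psi G rt t' → t = t' := by
  intro t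
  induction t with
  | nil =>
    intro t' _ h2 heq
    have := psi_dist hdeg t' h2
    rw [← heq] at this
    simp only [psi, SimpleGraph.dist_self] at this
    exact (List.length_eq_zero_iff.mp this.symm).symm
  | cons c t ih =>
    intro t' h1 h2 heq
    match t' with
    | [] =>
      exfalso
      have := psi_dist hdeg (c :: t) h1
      rw [heq] at this
      simp only [psi, SimpleGraph.dist_self, List.length_cons] at this
      omega
    | c' :: t'' =>
      simp only [List.length_cons] at h1 h2
      have hch1 := psi_child hdeg c t (by omega)
      have hch2 := psi_child hdeg c' t'' (by omega)
      rw [← heq] at hch2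
      have hpar : psi G rt t = psi G rt t'' :=
        parent_unique hT hch1.1 hch1.2 hch2.1 hch2.2
      have ht : t = t'' := ih t'' (by omega) (by omega) hpar
      subst ht
      have hv : {x | IsChild G rt (psi G rt t) x}.ncard = 2 := by
        apply internal_two hdeg
        rw [psi_dist hdeg t (by omega)]
        omega
      have hcc : c = c' := by
        by_contra hne
        rcases c <;> rcases c'
        · exact hne rfl
        · exact (ch_spec hv).1 (by simpa [psi, hpar] using heq)
        · exact (ch_spec hv).1 (by simpa [psi, hpar] using heq.symm)
        · exact hne rfl
      rw [hcc]

include hT hdeg in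
lemma psi_surj : ∀ v : V, ∃ t : List Bool, t.length = G.dist rt v ∧ psi G rt t = v := by
  suffices hn : ∀ (n : ℕ) (v : V), G.dist rt v = n →
      ∃ t : List Bool, t.length = G.dist rt v ∧ psi G rt t = v by
    intro v; exact hn (G.dist rt v) v rfl
  intro n
  induction n with
  | zero =>
    intro v hv
    have hrtv : rt = v := (hT.isConnected.dist_eq_zero_iff).mp hv
    refine ⟨[], by simp [hv], ?_⟩
    simpa [psi] using hrtv
  | succ n ih =>
    intro v hv
    have hvne : G.dist rt v ≠ 0 := by omega
    obtain ⟨u, hadj, hdu⟩ := parent_exists hT hvne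
    have hun : G.dist rt u = n := by omega
    obtain ⟨t, hlen, hpsi⟩ := ih u hun
    have hdvh : G.dist rt v ≤ h := dist_le_h hdeg v
    have hvint : {x | IsChild G rt u x}.ncard = 2 := internal_two hdeg (by omega)
    have hvmem : v ∈ {x | IsChild G rt u x} := ⟨hadj, hdu⟩
    rw [(ch_spec hvint).2] at hvmem
    rcases hvmem with hveq | hveq
    · refine ⟨false :: t, by simp; omega, ?_⟩
      simp only [psi, hpsi]
      exact hveq.symm
    · refine ⟨true :: t, by simp; omega, ?_⟩
      simp only [psi, hpsi]
      exact hveq.symm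

include hT hdeg in
lemma exists_equiv : ∃ e : BTv h ≃ V, ∀ a b : BTv h, (mG h).Adj a b ↔ G.Adj (e a) (e b) := by
  set f : BTv h → V := fun a => psi G rt a.1.reverse with hf
  have hlenrev : ∀ a : BTv h, a.1.reverse.length ≤ h := by
    intro a; rw [List.length_reverse]; exact a.2
  have hfd : ∀ a : BTv h, G.dist rt (f a) = a.1.length := by
    intro a
    rw [hf]
    have := psi_dist hdeg a.1.reverse (hlenrev a)
    rwa [List.length_reverse] at this
  have hinj : Function.Injective f := by
    intro a b hab
    have := psi_inj hT hdeg a.1.reverse b.1.reverse (hlenrev a) (hlenrev b) hab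
    exact Subtype.ext (List.reverse_injective this)
  have hsurj : Function.Surjective f := by
    intro v
    obtain ⟨t, hlen, hpsi⟩ := psi_surj hT hdeg v
    have htle : t.length ≤ h := by rw [hlen]; exact dist_le_h hdeg v
    refine ⟨⟨t.reverse, by rwa [List.length_reverse]⟩, ?_⟩
    rw [hf]
    simpa [List.reverse_reverse] using hpsi
  have hfwd : ∀ (a b : BTv h) (c : Bool), b.1 = a.1 ++ [c] → G.Adj (f a) (f b) := by
    intro a b c hba
    have hrev : b.1.reverse = c :: a.1.reverse := by rw [hba]; simp
    have hlen : a.1.reverse.length + 1 ≤ h := by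
      have := b.2
      rw [hba] at this
      simp at this
      rw [List.length_reverse]
      omega
    have := (psi_child hdeg c a.1.reverse hlen).1
    rw [hf]
    simpa [hrev] using this
  refine ⟨Equiv.ofBijective f ⟨hinj, hsurj⟩, ?_⟩
  intro a b
  constructor
  · rintro (⟨c, hc⟩ | ⟨c, hc⟩)
    · exact hfwd a b c hc
    · exact (hfwd b a c hc).symm
  · intro hadj
    change G.Adj (f a) (f b) at hadj
    rcases adj_dist_succ hT hadj with hd | hd
    · rw [hfd a, hfd b] at hd
      -- b is a child : b.1 = bl ++ [c]
      rcases List.eq_nil_or_concat b.1 with hnil | ⟨bl, c, hbl⟩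
      · rw [hnil] at hd; simp at hd
      · have hrev : b.1.reverse = c :: bl.reverse := by rw [hbl]; simp
        have hlbl : bl.length + 1 ≤ h := by
          have := b.2; rw [hbl] at this; simp at this; omega
        have hch : IsChild G rt (psi G rt bl.reverse) (f b) := by
          have := psi_child hdeg c bl.reverse (by rw [List.length_reverse]; omega)
          rw [hf]
          simpa [hrev] using this
        have hch2 : IsChild G rt (f a) (f b) := by
          refine ⟨hadj, ?_⟩
          rw [hfd a, hfd b]
          exact hd
        have hpar : f a = psi G rt bl.reverse :=
          parent_unique hT hch2.1 hch2.2 hch.1 hch.2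
        have hble : bl.length ≤ h := by omega
        have : a.1.reverse = bl.reverse := by
          apply psi_inj hT hdeg _ _ (hlenrev a) (by rwa [List.length_reverse]) hpar
        have hab : a.1 = bl := List.reverse_injective this
        exact Or.inl ⟨c, by rw [hbl, hab]; simp [List.concat_eq_append]⟩
    · rw [hfd a, hfd b] at hd
      rcases List.eq_nil_or_concat a.1 with hnil | ⟨al, c, hal⟩
      · rw [hnil] at hd; simp at hd
      · have hrev : a.1.reverse = c :: al.reverse := by rw [hal]; simp
        have hlal : al.length + 1 ≤ h := by
          have := a.2; rw [hal] at this; simp at this; omega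
        have hch : IsChild G rt (psi G rt al.reverse) (f a) := by
          have := psi_child hdeg c al.reverse (by rw [List.length_reverse]; omega)
          rw [hf]
          simpa [hrev] using this
        have hch2 : IsChild G rt (f b) (f a) := by
          refine ⟨hadj.symm, ?_⟩
          rw [hfd a, hfd b]
          exact hd
        have hpar : f b = psi G rt al.reverse :=
          parent_unique hT hch2.1 hch2.2 hch.1 hch.2
        have : b.1.reverse = al.reverse := by
          apply psi_inj hT hdeg _ _ (hlenrev b) (by rw [List.length_reverse]; omega) hpar
        have hab : b.1 = al := List.reverse_injective this
        exact Or.inr ⟨c, by rw [hal, hab]; simp [List.concat_eq_append]⟩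

end Abstract

lemma isKThin_transfer {V₁ V₂ : Type*} {G₁ : SimpleGraph V₁} {G₂ : SimpleGraph V₂}
    (e : V₁ ≃ V₂) (hadj : ∀ a b : V₁, G₁.Adj a b ↔ G₂.Adj (e a) (e b)) {k : ℕ}
    (hk : IsKThin G₁ k) : IsKThin G₂ k := by
  obtain ⟨r, hSTO, C, hcons⟩ := hk
  haveI := hSTO
  refine ⟨fun a b => r (e.symm a) (e.symm b), ?_, fun a => C (e.symm a), ?_⟩
  · refine { trichotomous := ?_, irrefl := ?_, trans := ?_ }
    · intro a b hab hba
      rcases trichotomous_of r (e.symm a) (e.symm b) with h1 | h1 | h1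
      · exact absurd h1 hab
      · have := congrArg e h1
        simpa using this
      · exact absurd h1 hba
    · intro a ha
      exact irrefl_of r _ ha
    · intro a b c h1 h2
      exact trans_of r h1 h2
  · intro u v w h1 h2 hC hAdj
    have hG1 : G₁.Adj (e.symm u) (e.symm w) := by
      rw [hadj (e.symm u) (e.symm w)]
      simpa using hAdj
    have := hcons (e.symm u) (e.symm v) (e.symm w) h1 h2 hC hG1
    have := (hadj (e.symm v) (e.symm w)).mp this
    simpa using this

end CBT

theorem thinness_complete_binary [Fintype V] (G : SimpleGraph V) (rt : V) (h : ℕ)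
    (hG : IsCompleteMAryTree G rt 2 h) :
    Thinness G = (h + 3) / 3 := by
  obtain ⟨hT, hdeg⟩ := hG
  obtain ⟨e, he⟩ := CBT.exists_equiv hT hdeg
  have h3 : (h + 3) / 3 = h / 3 + 1 := by omega
  have hup : IsKThin G ((h + 3) / 3) := by
    rw [h3]
    exact CBT.isKThin_transfer e he (CBT.model_upper h)
  have hlow : ∀ k ∈ {k | IsKThin G k}, (h + 3) / 3 ≤ k := by
    intro k hk
    have he' : ∀ a b : V, G.Adj a b ↔ (CBT.mG h).Adj (e.symm a) (e.symm b) := by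
      intro a b
      rw [he (e.symm a) (e.symm b)]
      simp
    have hmk : IsKThin (CBT.mG h) k := CBT.isKThin_transfer e.symm he' hk
    have := CBT.model_lower_classes h k hmk
    omega
  exact le_antisymm (Nat.sInf_le hup) (le_csInf ⟨_, hup⟩ hlow)
end

section
/- For any tree T with diameter d, thin(T) ≤ ⌈(d+1)/4⌉. -/
open SimpleGraph

variable {V : Type*}

open List
open List

section LexLemmas
variable {α : Type*} [LinearOrder α]

lemma lex_cancel : ∀ (A X Y : List α), List.Lex (· < ·) (A ++ X) (A ++ Y) → List.Lex (· < ·) X Y := by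
  intro A
  induction A with
  | nil => intro X Y h; exact h
  | cons a A ih =>
    intro X Y h
    rw [List.cons_append, List.cons_append, List.lex_cons_iff] at h
    exact ih X Y h

lemma lex_prefix : ∀ (A X : List α), X ≠ [] → List.Lex (· < ·) A (A ++ X) := by
  intro A
  induction A with
  | nil => intro X hX; cases X with
    | nil => exact absurd rfl hX
    | cons b t => exact List.Lex.nil
  | cons a A ih => intro X hX; exact List.Lex.cons (ih X hX)

lemma lex_sandwich : ∀ (A : List α) (X s t : List α),
    List.Lex (· < ·) (A ++ s) X → List.Lex (· < ·) X (A ++ t) →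
    ∃ X', X = A ++ X' ∧ List.Lex (· < ·) s X' ∧ List.Lex (· < ·) X' t := by
  intro A
  induction A with
  | nil => intro X s t h1 h2; exact ⟨X, rfl, h1, h2⟩
  | cons a A ih =>
    intro X s t h1 h2
    rw [List.cons_append] at h1 h2
    cases h1 with
    | @rel _ _ b X₀ hab =>
      cases h2 with
      | rel hba => exact absurd hab (asymm hba)
      | cons h => exact absurd hab (lt_irrefl _)
    | @cons _ _ X₀ h1' =>
      cases h2 with
      | rel hba => exact absurd hba (lt_irrefl _)
      | cons h2' =>
        obtain ⟨X', rfl, hs, ht⟩ := ih X₀ s t h1' h2'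
        exact ⟨X', rfl, hs, ht⟩

lemma lex_head : ∀ {a b : α} {s t : List α}, List.Lex (· < ·) (a :: s) (b :: t) →
    a < b ∨ (a = b ∧ List.Lex (· < ·) s t) := by
  intro a b s t h
  cases h with
  | rel h => exact Or.inl h
  | cons h => exact Or.inr ⟨rfl, h⟩

end LexLemmas


section Chain
variable {V : Type*}

def fchain (par : V → V) (dep : V → ℕ) : ℕ → V → List V
  | 0, _ => []
  | (n+1), v => if dep v = 0 then [] else fchain par dep n (par v) ++ [v]

def rchain (par : V → V) (dep : V → ℕ) (v : V) : List V := fchain par dep (dep v) v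

def ancList (par : V → V) (dep : V → ℕ) (root : V) (v : V) : List V :=
  root :: rchain par dep v

variable {par : V → V} {dep : V → ℕ} {root : V}

lemma fchain_stable (hpar : ∀ v, dep v ≠ 0 → dep (par v) + 1 = dep v) :
    ∀ n v, dep v ≤ n → fchain par dep n v = rchain par dep v := by
  intro n
  induction n using Nat.strong_induction_on with
  | _ n ih =>
    intro v hv
    match n with
    | 0 => rw [Nat.le_zero] at hv; rw [rchain, hv]
    | Nat.succ n =>
      by_cases h0 : dep v = 0
      · rw [rchain, h0]; simp [fchain, h0]
      · have hp := hpar v h0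
        have h1 : fchain par dep (n+1) v = fchain par dep n (par v) ++ [v] := by
          simp [fchain, h0]
        have h2 : rchain par dep v = fchain par dep (dep v - 1) (par v) ++ [v] := by
          rw [rchain]
          obtain ⟨m, hm⟩ : ∃ m, dep v = m + 1 := ⟨dep v - 1, by omega⟩
          rw [hm]; simp [fchain, h0, hm]
        rw [h1, h2, ih n (by omega) (par v) (by omega),
          ih (dep v - 1) (by omega) (par v) (by omega)]

lemma rchain_zero (v : V) (h0 : dep v = 0) : rchain par dep v = [] := by
  rw [rchain, h0]; rfl

lemma rchain_succ (hpar : ∀ v, dep v ≠ 0 → dep (par v) + 1 = dep v) (v : V) (h0 : dep v ≠ 0) :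
    rchain par dep v = rchain par dep (par v) ++ [v] := by
  have hp := hpar v h0
  rw [rchain]
  obtain ⟨m, hm⟩ : ∃ m, dep v = m + 1 := ⟨dep v - 1, by omega⟩
  rw [hm]
  simp only [fchain, h0, if_false]
  rw [fchain_stable hpar m (par v) (by omega)]

lemma length_rchain (hpar : ∀ v, dep v ≠ 0 → dep (par v) + 1 = dep v) (v : V) :
    (rchain par dep v).length = dep v := by
  generalize hn : dep v = n
  induction n generalizing v with
  | zero => rw [rchain_zero v hn]; rfl
  | succ n ih =>
    rw [rchain_succ hpar v (by omega)]
    have hp := hpar v (by omega)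
    rw [List.length_append, ih (par v) (by omega)]
    simp

lemma ancList_succ (hpar : ∀ v, dep v ≠ 0 → dep (par v) + 1 = dep v) (v : V) (h0 : dep v ≠ 0) :
    ancList par dep root v = ancList par dep root (par v) ++ [v] := by
  rw [ancList, ancList, rchain_succ hpar v h0]; rfl

lemma ancList_zero (v : V) (h0 : dep v = 0) : ancList par dep root v = [root] := by
  rw [ancList, rchain_zero v h0]

lemma anc_concat (hpar : ∀ v, dep v ≠ 0 → dep (par v) + 1 = dep v)
    (hroot : ∀ v, dep v = 0 → v = root) (v : V) :
    ∃ l, ancList par dep root v = l ++ [v] := by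
  by_cases h0 : dep v = 0
  · exact ⟨[], by rw [ancList_zero v h0, hroot v h0]; rfl⟩
  · exact ⟨ancList par dep root (par v), ancList_succ hpar v h0⟩

lemma anc_self (hpar : ∀ v, dep v ≠ 0 → dep (par v) + 1 = dep v)
    (hroot : ∀ v, dep v = 0 → v = root) (v : V) : v ∈ ancList par dep root v := by
  obtain ⟨l, hl⟩ := anc_concat hpar hroot v
  rw [hl]; simp

lemma anc_prefix (hpar : ∀ v, dep v ≠ 0 → dep (par v) + 1 = dep v)
    (hroot : ∀ v, dep v = 0 → v = root) (v : V) : ∀ x, x ∈ ancList par dep root v →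
    ancList par dep root x <+: ancList par dep root v := by
  generalize hn : dep v = n
  induction n generalizing v with
  | zero =>
    intro x hx
    rw [ancList_zero v hn] at hx ⊢
    have hxr : x = root := List.mem_singleton.mp hx
    have hdr : dep root = 0 := by rw [← hroot v hn]; exact hn
    rw [hxr, ancList_zero root hdr]
  | succ n ih =>
    intro x hx
    rw [ancList_succ hpar v (by omega)] at hx ⊢
    rcases List.mem_append.mp hx with h | h
    · exact (ih (par v) (by have := hpar v (by omega); omega) x h).trans
        (List.prefix_append _ _)
    · rcases List.mem_singleton.mp h with rfl
      rw [← ancList_succ hpar x (by omega)]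

lemma length_ancList (hpar : ∀ v, dep v ≠ 0 → dep (par v) + 1 = dep v) (v : V) :
    (ancList par dep root v).length = dep v + 1 := by
  rw [ancList, List.length_cons, length_rchain hpar]

lemma mem_anc_dep_le (hpar : ∀ v, dep v ≠ 0 → dep (par v) + 1 = dep v)
    (hroot : ∀ v, dep v = 0 → v = root) (v x : V)
    (hx : x ∈ ancList par dep root v) : dep x ≤ dep v := by
  have h := (anc_prefix hpar hroot v x hx).length_le
  rw [length_ancList hpar, length_ancList hpar] at h
  omega

lemma anc_eq_of_dep (hpar : ∀ v, dep v ≠ 0 → dep (par v) + 1 = dep v)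
    (hroot : ∀ v, dep v = 0 → v = root) (v x y : V) (hx : x ∈ ancList par dep root v)
    (hy : y ∈ ancList par dep root v) (hdep : dep x = dep y) : x = y := by
  have px := anc_prefix hpar hroot v x hx
  have py := anc_prefix hpar hroot v y hy
  have hlen : (ancList par dep root x).length = (ancList par dep root y).length := by
    rw [length_ancList hpar, length_ancList hpar, hdep]
  have heq : ancList par dep root x = ancList par dep root y := by
    rcases List.prefix_or_prefix_of_prefix px py with h | h
    · exact h.eq_of_length hlen
    · exact (h.eq_of_length hlen.symm).symm
  obtain ⟨lx, hlx⟩ := anc_concat hpar hroot x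
  obtain ⟨ly, hly⟩ := anc_concat hpar hroot y
  rw [hlx, hly] at heq
  have : lx.length = ly.length := by
    have := congrArg List.length heq
    simp at this; omega
  exact List.singleton_injective (List.append_inj_right heq this)

end Chain

section KeySec
variable {V : Type*}
attribute [local instance] Classical.propDecidable

structure TreeData (V : Type*) where
  par : V → V
  dep : V → ℕ
  root : V
  spine : ℕ → V
  d : ℕ
  enc : V → ℕ
  hpar : ∀ v, dep v ≠ 0 → dep (par v) + 1 = dep v
  hroot : ∀ v, dep v = 0 → v = root
  hspine_dep : ∀ j, j ≤ d → dep (spine j) = j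
  hspine0 : spine 0 = root
  hspine_par : ∀ j, j ≤ d → j ≠ 0 → par (spine j) = spine (j - 1)
  henc : Function.Injective enc

namespace TreeData
variable (T : TreeData V)

noncomputable def iv (v : V) : ℕ :=
  Nat.findGreatest (fun j => T.spine j ∈ ancList T.par T.dep T.root v) T.d

noncomputable def depth (v : V) : ℕ := T.dep v - T.iv v

noncomputable def chainA (v : V) : List V := (rchain T.par T.dep v).drop (T.iv v)

noncomputable def enc' (x : V) : ℕ∞ := ((T.enc x + 1 : ℕ) : ℕ∞)

noncomputable def key (v : V) : List ℕ∞ :=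
  (T.iv v : ℕ∞) :: ((T.chainA v).map T.enc' ++ (if Even (T.depth v) then [(⊤ : ℕ∞)] else []))

lemma enc'_inj : Function.Injective T.enc' := by
  intro a b h
  apply T.henc
  have := Nat.cast_injective (R := ℕ∞) h
  omega

lemma enc'_ne_top (x : V) : T.enc' x ≠ ⊤ := by
  rw [enc']
  exact ENat.coe_ne_top _

lemma iv_le (v : V) : T.iv v ≤ T.d := by
  simp only [iv]
  exact Nat.findGreatest_le _

lemma spine_iv_mem (v : V) : T.spine (T.iv v) ∈ ancList T.par T.dep T.root v := by
  simp only [iv]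
  exact Nat.findGreatest_spec (P := fun j => T.spine j ∈ ancList T.par T.dep T.root v)
    (Nat.zero_le _) (by show T.spine 0 ∈ _; rw [T.hspine0, ancList]; exact List.mem_cons_self)

lemma le_iv (v : V) (j : ℕ) (hj : j ≤ T.d)
    (hmem : T.spine j ∈ ancList T.par T.dep T.root v) : j ≤ T.iv v := by
  simp only [iv]
  exact Nat.le_findGreatest hj hmem

lemma iv_le_dep (v : V) : T.iv v ≤ T.dep v := by
  have h1 := T.spine_iv_mem v
  have h2 := mem_anc_dep_le T.hpar T.hroot v _ h1
  rw [T.hspine_dep _ (T.iv_le v)] at h2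
  exact h2

lemma on_spine_eq (v : V) (h0 : T.depth v = 0) : v = T.spine (T.iv v) := by
  refine anc_eq_of_dep T.hpar T.hroot v v (T.spine (T.iv v))
    (anc_self T.hpar T.hroot v) (T.spine_iv_mem v) ?_
  rw [T.hspine_dep _ (T.iv_le v)]
  have := T.iv_le_dep v
  rw [depth] at h0
  omega

lemma iv_spine (j : ℕ) (hj : j ≤ T.d) : T.iv (T.spine j) = j := by
  have h1 : j ≤ T.iv (T.spine j) :=
    T.le_iv _ j hj (anc_self T.hpar T.hroot _)
  have h2 := T.iv_le_dep (T.spine j)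
  rw [T.hspine_dep _ hj] at h2
  omega

lemma depth_spine (j : ℕ) (hj : j ≤ T.d) : T.depth (T.spine j) = 0 := by
  rw [depth, T.iv_spine j hj, T.hspine_dep _ hj]
  omega

lemma dep_ne_zero_of_depth (v : V) (h : T.depth v ≠ 0) : T.dep v ≠ 0 := by
  intro h0
  rw [depth, h0] at h
  omega

lemma off_spine (v : V) (h : T.depth v ≠ 0) (j : ℕ) (hj : j ≤ T.d) : T.spine j ≠ v := by
  intro he
  rw [← he] at h
  exact h (T.depth_spine j hj)

lemma iv_par (v : V) (h : T.depth v ≠ 0) : T.iv (T.par v) = T.iv v := by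
  have hdep := T.dep_ne_zero_of_depth v h
  have hsucc := ancList_succ (root := T.root) T.hpar v hdep
  apply _root_.le_antisymm
  · apply T.le_iv v _ (T.iv_le (T.par v))
    rw [hsucc]
    exact List.mem_append_left _ (T.spine_iv_mem (T.par v))
  · apply T.le_iv (T.par v) _ (T.iv_le v)
    have hmem := T.spine_iv_mem v
    rw [hsucc] at hmem
    rcases List.mem_append.mp hmem with hm | hm
    · exact hm
    · exact absurd (List.mem_singleton.mp hm) (T.off_spine v h _ (T.iv_le v))

lemma depth_par (v : V) (h : T.depth v ≠ 0) : T.depth (T.par v) + 1 = T.depth v := by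
  have hdep := T.dep_ne_zero_of_depth v h
  have h1 := T.hpar v hdep
  have h2 := T.iv_par v h
  have h3 := T.iv_le_dep (T.par v)
  have h4 := T.iv_le_dep v
  rw [depth, depth, h2]
  rw [depth] at h
  omega

lemma chainA_zero (v : V) (h0 : T.depth v = 0) : T.chainA v = [] := by
  apply List.drop_eq_nil_of_le
  rw [length_rchain T.hpar]
  rw [depth] at h0
  have := T.iv_le_dep v
  omega

lemma chainA_succ (v : V) (h : T.depth v ≠ 0) :
    T.chainA v = T.chainA (T.par v) ++ [v] := by
  have hdep := T.dep_ne_zero_of_depth v h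
  rw [chainA, chainA, rchain_succ T.hpar v hdep, T.iv_par v h,
    List.drop_append_of_le_length]
  rw [length_rchain T.hpar, ← T.iv_par v h]
  exact T.iv_le_dep (T.par v)

lemma length_chainA (v : V) : (T.chainA v).length = T.depth v := by
  rw [chainA, List.length_drop, length_rchain T.hpar, depth]

lemma chainA_concat (v : V) (h : T.depth v ≠ 0) : ∃ l, T.chainA v = l ++ [v] :=
  ⟨T.chainA (T.par v), T.chainA_succ v h⟩

lemma chainA_inj (u v : V) (hiv : T.iv u = T.iv v) (hch : T.chainA u = T.chainA v) :
    u = v := by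
  have hlen : T.depth u = T.depth v := by
    rw [← T.length_chainA, ← T.length_chainA, hch]
  by_cases h0 : T.depth u = 0
  · have h0' : T.depth v = 0 := by omega
    rw [T.on_spine_eq u h0, T.on_spine_eq v h0', hiv]
  · have h0' : T.depth v ≠ 0 := by omega
    obtain ⟨lu, hu⟩ := T.chainA_concat u h0
    obtain ⟨lv, hv⟩ := T.chainA_concat v h0'
    rw [hu, hv] at hch
    have hl : lu.length = lv.length := by
      have := congrArg List.length hch
      simp at this; omega
    exact List.singleton_injective (List.append_inj_right hch hl)

lemma key_depth_zero (v : V) (h0 : T.depth v = 0) :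
    T.key v = [(T.iv v : ℕ∞), ⊤] := by
  rw [key, T.chainA_zero v h0, h0]
  simp

lemma key_even (v : V) (h : T.depth v ≠ 0) (he : Even (T.depth v)) :
    T.key v = (T.iv v : ℕ∞) :: (T.chainA (T.par v)).map T.enc' ++ [T.enc' v, ⊤] := by
  rw [key, T.chainA_succ v h, if_pos he, List.map_append]
  simp

lemma key_odd (v : V) (h : T.depth v ≠ 0) (he : ¬ Even (T.depth v)) :
    T.key v = (T.iv v : ℕ∞) :: (T.chainA (T.par v)).map T.enc' ++ [T.enc' v] := by
  rw [key, T.chainA_succ v h, if_neg he, List.map_append]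
  simp

lemma key_inj (u v : V) (h : T.key u = T.key v) : u = v := by
  rw [key, key] at h
  have hiv : T.iv u = T.iv v := by
    have := (List.cons.injEq _ _ _ _).mp h
    exact_mod_cast this.1
  have htail := ((List.cons.injEq _ _ _ _).mp h).2
  apply T.chainA_inj u v hiv
  have hmap : (T.chainA u).map T.enc' = (T.chainA v).map T.enc' := by
    by_cases heu : Even (T.depth u) <;> by_cases hev : Even (T.depth v)
    · rw [if_pos heu, if_pos hev] at htail
      have hlen : ((T.chainA u).map T.enc').length = ((T.chainA v).map T.enc').length := by
        have := congrArg List.length htail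
        simp only [List.length_append] at this
        simpa using this
      exact (List.append_inj htail hlen).1
    · exfalso
      rw [if_pos heu, if_neg hev, List.append_nil] at htail
      have hmem : (⊤ : ℕ∞) ∈ (T.chainA v).map T.enc' := by
        rw [← htail]; simp
      obtain ⟨x, _, hx⟩ := List.mem_map.mp hmem
      exact T.enc'_ne_top x hx
    · exfalso
      rw [if_neg heu, if_pos hev, List.append_nil] at htail
      have hmem : (⊤ : ℕ∞) ∈ (T.chainA u).map T.enc' := by
        rw [htail]; simp
      obtain ⟨x, _, hx⟩ := List.mem_map.mp hmem
      exact T.enc'_ne_top x hx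
    · rw [if_neg heu, if_neg hev, List.append_nil, List.append_nil] at htail
      exact htail
  exact List.map_injective_iff.mpr T.enc'_inj hmap

end TreeData
end KeySec

section Consist
variable {V : Type*}
namespace TreeData
variable (T : TreeData V)

lemma key_if_even (x : V) (he : Even (T.depth x)) :
    T.key x = (T.iv x : ℕ∞) :: ((T.chainA x).map T.enc' ++ [(⊤:ℕ∞)]) := by
  rw [key, if_pos he]

lemma key_if_odd (x : V) (he : ¬ Even (T.depth x)) :
    T.key x = (T.iv x : ℕ∞) :: (T.chainA x).map T.enc' := by
  rw [key, if_neg he, List.append_nil]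

lemma mem_mapA_ne_top (x : V) : ∀ y ∈ (T.chainA x).map T.enc', y ≠ ⊤ := by
  intro y hy
  obtain ⟨z, _, hz⟩ := List.mem_map.mp hy
  rw [← hz]
  exact T.enc'_ne_top z

lemma not_lex_top_tail (v : V) :
    ¬ List.Lex (· < ·) [(⊤ : ℕ∞)]
      ((T.chainA v).map T.enc' ++ (if Even (T.depth v) then [(⊤:ℕ∞)] else [])) := by
  intro h
  have hB := T.mem_mapA_ne_top v
  cases hc : (T.chainA v).map T.enc' with
  | nil =>
    rw [hc, List.nil_append] at h
    by_cases he : Even (T.depth v)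
    · rw [if_pos he] at h
      cases h with
      | rel h => exact not_top_lt h
      | cons h => exact List.not_lex_nil h
    · rw [if_neg he] at h
      exact List.not_lex_nil h
  | cons b l =>
    rw [hc, List.cons_append] at h
    cases h with
    | rel h => exact not_top_lt h
    | cons h =>
      refine T.mem_mapA_ne_top v ⊤ ?_ rfl
      rw [hc]; exact List.mem_cons_self

lemma not_lex_top_singleton {x : ℕ∞} (hx : x ≠ ⊤) :
    ¬ List.Lex (· < ·) [(⊤ : ℕ∞)] [x] := by
  intro h
  cases h with
  | rel h => exact not_top_lt h
  | cons h => exact List.not_lex_nil h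

theorem key_consistent (Adj : V → V → Prop)
    (hAdjP : ∀ u w, Adj u w → (T.dep u ≠ 0 ∧ T.par u = w) ∨ (T.dep w ≠ 0 ∧ T.par w = u))
    (hPAdj : ∀ x, T.dep x ≠ 0 → Adj x (T.par x))
    {u v w : V}
    (h1 : List.Lex (· < ·) (T.key u) (T.key v))
    (h2 : List.Lex (· < ·) (T.key v) (T.key w))
    (hcls : T.depth u / 2 = T.depth v / 2)
    (ha : Adj u w) : Adj v w := by
  have h13 : List.Lex (· < ·) (T.key u) (T.key w) := List.lex_trans lt_trans h1 h2
  rcases hAdjP u w ha with ⟨hdu, hpu⟩ | ⟨hdw, hpw⟩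
  · -- w = par u
    by_cases hduz : T.depth u = 0
    · -- u on spine
      exfalso
      have hiveq : T.iv u = T.dep u := by
        have := T.iv_le_dep u; rw [depth] at hduz; omega
      have hjne : T.iv u ≠ 0 := by omega
      have hw : w = T.spine (T.iv u - 1) := by
        rw [← hpu]
        conv_lhs => rw [T.on_spine_eq u hduz]
        rw [T.hspine_par _ (T.iv_le u) hjne]
      have hle : T.iv u - 1 ≤ T.d := by have := T.iv_le u; omega
      have hkw : T.key w = [((T.iv u - 1 : ℕ) : ℕ∞), ⊤] := by
        rw [hw, T.key_depth_zero _ (T.depth_spine _ hle), T.iv_spine _ hle]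
      have hku : T.key u = [(T.iv u : ℕ∞), ⊤] := T.key_depth_zero u hduz
      rw [hku, hkw] at h13
      rcases lex_head h13 with h | ⟨h, h'⟩
      · rw [Nat.cast_lt] at h; omega
      · rw [Nat.cast_inj] at h; omega
    · have hw_iv : T.iv w = T.iv u := by rw [← hpu]; exact T.iv_par u hduz
      have hw_dep : T.depth w + 1 = T.depth u := by rw [← hpu]; exact T.depth_par u hduz
      have hchu : (T.chainA u).map T.enc' = (T.chainA w).map T.enc' ++ [T.enc' u] := by
        rw [T.chainA_succ u hduz, hpu, List.map_append]; rfl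
      by_cases hue : Even (T.depth u)
      · -- even: contradiction via key w < key u
        exfalso
        have hwo : ¬ Even (T.depth w) := by
          rw [Nat.even_iff] at hue ⊢; omega
        have hkw : T.key w = (T.iv u : ℕ∞) :: (T.chainA w).map T.enc' := by
          rw [T.key_if_odd w hwo, hw_iv]
        have hku : T.key u = (T.iv u : ℕ∞) :: (T.chainA w).map T.enc' ++ [T.enc' u, ⊤] := by
          rw [T.key_if_even u hue, hchu]
          simp
        have hlt : List.Lex (· < ·) (T.key w) (T.key u) := by
          rw [hkw, hku]
          exact List.Lex.cons (lex_prefix _ _ (by simp))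
        exact asymm h13 hlt
      · -- depth u odd: main case
        have hwe : Even (T.depth w) := by rw [Nat.even_iff] at hue ⊢; omega
        have hku : T.key u = (T.iv u : ℕ∞) :: ((T.chainA w).map T.enc' ++ [T.enc' u]) := by
          rw [T.key_if_odd u hue, hchu]
        have hkw : T.key w = (T.iv u : ℕ∞) :: ((T.chainA w).map T.enc' ++ [(⊤:ℕ∞)]) := by
          rw [T.key_if_even w hwe, hw_iv]
        rw [hku] at h1
        rw [hkw] at h2
        simp only [key] at h1 h2
        rcases lex_head h1 with hh1 | ⟨hh1, ht1⟩
        · exfalso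
          rcases lex_head h2 with hh2 | ⟨hh2, ht2⟩
          · rw [Nat.cast_lt] at hh1 hh2; omega
          · rw [Nat.cast_lt] at hh1; rw [Nat.cast_inj] at hh2; omega
        · rcases lex_head h2 with hh2 | ⟨hh2, ht2⟩
          · exfalso; rw [Nat.cast_lt] at hh2; rw [Nat.cast_inj] at hh1; omega
          · -- tails sandwich
            obtain ⟨X', hX, hsX, htX⟩ := lex_sandwich ((T.chainA w).map T.enc')
              _ [T.enc' u] [(⊤:ℕ∞)] ht1 ht2
            have hlenAw : ((T.chainA w).map T.enc').length = T.depth w := by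
              rw [List.length_map, T.length_chainA]
            by_cases hve : Even (T.depth v)
            · exfalso
              rw [if_pos hve] at hX
              have hlenv : ((T.chainA v).map T.enc').length = T.depth v := by
                rw [List.length_map, T.length_chainA]
              have hdve : T.depth v = T.depth w := by
                rw [Nat.even_iff] at hue hve
                omega
              have := List.append_inj hX (by rw [hlenv, hlenAw, hdve])
              rw [← this.2] at htX
              exact asymm htX htX
            · -- depth v odd : the good case
              have hdvz : T.depth v ≠ 0 := by
                rw [Nat.even_iff] at hve; omega
              have hdvv : T.depth v = T.depth w + 1 := by
                rw [Nat.even_iff] at hue hve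
                omega
              rw [if_neg hve, List.append_nil, T.chainA_succ v hdvz, List.map_append] at hX
              have hlenpv : ((T.chainA (T.par v)).map T.enc').length = T.depth w := by
                rw [List.length_map, T.length_chainA]
                have := T.depth_par v hdvz
                omega
              have hinj := List.append_inj hX (by rw [hlenpv, hlenAw])
              have hch : T.chainA (T.par v) = T.chainA w :=
                List.map_injective_iff.mpr T.enc'_inj hinj.1
              have hivpv : T.iv (T.par v) = T.iv w := by
                rw [Nat.cast_inj] at hh1
                rw [T.iv_par v hdvz, hw_iv]
                omega
              have hpvw : T.par v = w := T.chainA_inj _ _ hivpv hch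
              rw [← hpvw]
              exact hPAdj v (T.dep_ne_zero_of_depth v hdvz)
  · -- u = par w
    by_cases hwz : T.depth w = 0
    · -- w on spine
      have hivw : T.iv w = T.dep w := by
        have := T.iv_le_dep w; rw [depth] at hwz; omega
      have hjne : T.iv w ≠ 0 := by omega
      have hu : u = T.spine (T.iv w - 1) := by
        rw [← hpw]
        conv_lhs => rw [T.on_spine_eq w hwz]
        rw [T.hspine_par _ (T.iv_le w) hjne]
      have hle : T.iv w - 1 ≤ T.d := by have := T.iv_le w; omega
      have hku : T.key u = [((T.iv w - 1 : ℕ) : ℕ∞), ⊤] := by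
        rw [hu, T.key_depth_zero _ (T.depth_spine _ hle), T.iv_spine _ hle]
      have hkw : T.key w = [(T.iv w : ℕ∞), ⊤] := T.key_depth_zero w hwz
      have hdu0 : T.depth u = 0 := by rw [hu]; exact T.depth_spine _ hle
      have hivu : T.iv u = T.iv w - 1 := by rw [hu]; exact T.iv_spine _ hle
      -- extract iv v
      rw [hku] at h1
      rw [hkw] at h2
      simp only [key] at h1 h2
      have hiv_gt : T.iv w - 1 < T.iv v := by
        rcases lex_head h1 with hh | ⟨hh, ht⟩
        · rwa [Nat.cast_lt] at hh
        · exact absurd ht (T.not_lex_top_tail v)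
      have hiv_eq : T.iv v = T.iv w := by
        rcases lex_head h2 with hh | ⟨hh, ht⟩
        · rw [Nat.cast_lt] at hh; omega
        · rw [Nat.cast_inj] at hh; omega
      have hdvle : T.depth v ≤ 1 := by
        rw [hdu0] at hcls; omega
      by_cases hdv0 : T.depth v = 0
      · exfalso
        have hvw : v = w := by
          rw [T.on_spine_eq v hdv0, T.on_spine_eq w hwz, hiv_eq]
        rw [hvw] at h2
        have he0 : Even (T.depth w) := by rw [hwz]; exact Even.zero
        rw [T.chainA_zero w hwz, if_pos he0] at h2
        simp only [List.map_nil, List.nil_append] at h2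
        exact asymm h2 h2
      · have hdv1 : T.depth v ≠ 0 := hdv0
        have hpv0 : T.depth (T.par v) = 0 := by
          have := T.depth_par v hdv1; omega
        have hpvw : T.par v = w := by
          rw [T.on_spine_eq (T.par v) hpv0, T.on_spine_eq w hwz, T.iv_par v hdv1, hiv_eq]
        rw [← hpvw]
        exact hPAdj v (T.dep_ne_zero_of_depth v hdv1)
    · -- w off spine
      have hw_iv : T.iv w = T.iv u := by rw [← hpw]; exact (T.iv_par w hwz).symm
      have hw_dep : T.depth u + 1 = T.depth w := by
        have := T.depth_par w hwz; rw [hpw] at this; omega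
      have hchw : (T.chainA w).map T.enc' = (T.chainA u).map T.enc' ++ [T.enc' w] := by
        rw [T.chainA_succ w hwz, hpw, List.map_append]; rfl
      by_cases hue : Even (T.depth u)
      · -- contradiction : key w < key u essentially
        exfalso
        have hwo : ¬ Even (T.depth w) := by rw [Nat.even_iff] at hue ⊢; omega
        have hku : T.key u = (T.iv u : ℕ∞) :: ((T.chainA u).map T.enc' ++ [(⊤:ℕ∞)]) :=
          T.key_if_even u hue
        have hkw : T.key w = (T.iv u : ℕ∞) :: ((T.chainA u).map T.enc' ++ [T.enc' w]) := by
          rw [T.key_if_odd w hwo, hw_iv, hchw]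
        rw [hku, hkw] at h13
        rcases lex_head h13 with hh | ⟨hh, ht⟩
        · rw [Nat.cast_lt] at hh; omega
        · have := lex_cancel _ _ _ ht
          exact not_lex_top_singleton (T.enc'_ne_top w) this
      · -- depth u odd, w even: vacuous case
        exfalso
        have hwe : Even (T.depth w) := by rw [Nat.even_iff] at hue ⊢; omega
        have hduz : T.depth u ≠ 0 := by rw [Nat.even_iff] at hue; omega
        have hku : T.key u = (T.iv u : ℕ∞) :: ((T.chainA u).map T.enc' ++ []) := by
          rw [T.key_if_odd u hue, List.append_nil]
        have hkw : T.key w = (T.iv u : ℕ∞) ::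
            ((T.chainA u).map T.enc' ++ [T.enc' w, ⊤]) := by
          rw [T.key_if_even w hwe, hw_iv, hchw]
          simp
        rw [hku] at h1
        rw [hkw] at h2
        simp only [key] at h1 h2
        rcases lex_head h1 with hh1 | ⟨hh1, ht1⟩ <;>
          rcases lex_head h2 with hh2 | ⟨hh2, ht2⟩
        · rw [Nat.cast_lt] at hh1 hh2; omega
        · rw [Nat.cast_lt] at hh1; rw [Nat.cast_inj] at hh2; omega
        · rw [Nat.cast_lt] at hh2; rw [Nat.cast_inj] at hh1; omega
        · obtain ⟨X', hX, hsX, htX⟩ := lex_sandwich ((T.chainA u).map T.enc')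
            _ [] [T.enc' w, ⊤] ht1 ht2
          have hX'ne : X' ≠ [] := by
            intro hc; rw [hc] at hsX; exact List.not_lex_nil hsX
          have hlen := congrArg List.length hX
          rw [List.length_append, List.length_append, List.length_map, List.length_map,
            T.length_chainA, T.length_chainA] at hlen
          have hX'pos : 0 < X'.length := List.length_pos_iff.mpr hX'ne
          rw [Nat.even_iff] at hue
          by_cases hve : Even (T.depth v)
          · rw [if_pos hve] at hlen
            rw [Nat.even_iff] at hve
            simp only [List.length_singleton] at hlen
            omega
          · rw [if_neg hve] at hlen
            rw [Nat.even_iff] at hve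
            simp only [List.length_nil] at hlen
            omega

end TreeData
end Consist
section Graph
open SimpleGraph
variable {V : Type*} [DecidableEq V] (G : SimpleGraph V) (hT : G.IsTree)
include hT

noncomputable def thePath (x y : V) : G.Walk x y := (hT.existsUnique_path x y).exists.choose

lemma thePath_isPath (x y : V) : (thePath G hT x y).IsPath :=
  (hT.existsUnique_path x y).exists.choose_spec

lemma thePath_unique {x y : V} (q : G.Walk x y) (hq : q.IsPath) : q = thePath G hT x y :=
  (hT.existsUnique_path x y).unique hq (thePath_isPath G hT x y)

lemma length_thePath (x y : V) : (thePath G hT x y).length = G.dist x y := by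
  obtain ⟨s, hs⟩ := hT.isConnected.exists_walk_length_eq_dist x y
  have h1 : s.bypass = thePath G hT x y := thePath_unique G hT _ s.bypass_isPath
  have h2 : (thePath G hT x y).length ≤ G.dist x y := by
    rw [← h1, ← hs]
    exact Walk.length_bypass_le s
  exact le_antisymm h2 (dist_le _)

lemma exists_step (x y : V) (h : G.dist x y ≠ 0) :
    ∃ z, G.Adj x z ∧ G.dist z y + 1 = G.dist x y := by
  obtain ⟨p, hp⟩ := exists_walk_of_dist_ne_zero h
  cases p with
  | nil => rw [← hp] at h; exact absurd rfl h
  | @cons _ z _ h' q =>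
    refine ⟨z, h', ?_⟩
    rw [Walk.length_cons] at hp
    have h1 : G.dist z y ≤ q.length := dist_le q
    have h2 : G.dist x y ≤ G.dist x z + G.dist z y := hT.isConnected.dist_triangle
    have h3 : G.dist x z ≤ 1 := by
      have := dist_le (Walk.cons h' Walk.nil)
      simpa using this
    omega

lemma dist_drop {x y z : V} (p : G.Walk x y) (hz : z ∈ p.support) (hne : z ≠ x) :
    G.dist z y + 1 ≤ p.length := by
  have hspec := p.take_spec hz
  have hlen : (p.takeUntil z hz).length + (p.dropUntil z hz).length = p.length := by
    rw [← Walk.length_append, hspec]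
  have htake : (p.takeUntil z hz).length ≠ 0 := fun h0 =>
    hne (Walk.eq_of_length_eq_zero h0).symm
  have hd : G.dist z y ≤ (p.dropUntil z hz).length := dist_le _
  omega

lemma adj_dist_dichotomy {r u w : V} (h : G.Adj u w) :
    G.dist w r = G.dist u r + 1 ∨ G.dist u r = G.dist w r + 1 := by
  have hne : u ≠ w := h.ne
  have h1 : G.dist u r ≤ G.dist w r + 1 := by
    have := hT.isConnected.dist_triangle (u := u) (v := w) (w := r)
    have h3 : G.dist u w ≤ 1 := by
      have := dist_le (Walk.cons h Walk.nil); simpa using this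
    omega
  have h2 : G.dist w r ≤ G.dist u r + 1 := by
    have := hT.isConnected.dist_triangle (u := w) (v := u) (w := r)
    have h3 : G.dist w u ≤ 1 := by
      have := dist_le (Walk.cons h.symm Walk.nil); simpa using this
    omega
  have hneq : G.dist u r ≠ G.dist w r := by
    intro he
    by_cases hw : w ∈ (thePath G hT u r).support
    · have := dist_drop G hT (thePath G hT u r) hw (Ne.symm hne)
      rw [length_thePath] at this
      omega
    · have hpath : (Walk.cons h.symm (thePath G hT u r)).IsPath :=
        (thePath_isPath G hT u r).cons hw
      have heq := thePath_unique G hT _ hpath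
      have hlen := congrArg Walk.length heq
      rw [Walk.length_cons, length_thePath, length_thePath] at hlen
      omega
  omega

noncomputable def parFn (r : V) : V → V := fun v => (thePath G hT v r).getVert 1

lemma down_eq {r v x : V} (hx : G.Adj v x) (hd : G.dist x r + 1 = G.dist v r) :
    x = parFn G hT r v := by
  have hvs : v ∉ (thePath G hT x r).support := by
    intro hmem
    have := dist_drop G hT (thePath G hT x r) hmem hx.ne
    rw [length_thePath] at this
    omega
  have hpath : (Walk.cons hx (thePath G hT x r)).IsPath :=
    (thePath_isPath G hT x r).cons hvs
  have heq := thePath_unique G hT _ hpath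
  have := congrArg (fun p => Walk.getVert p 1) heq
  simp only [Walk.getVert_cons_succ, Walk.getVert_zero] at this
  rw [parFn, ← this]

lemma parFn_spec {r v : V} (h : G.dist v r ≠ 0) :
    G.Adj v (parFn G hT r v) ∧ G.dist (parFn G hT r v) r + 1 = G.dist v r := by
  obtain ⟨z, hz, hzd⟩ := exists_step G hT v r h
  have := down_eq G hT hz hzd
  rw [← this]
  exact ⟨hz, hzd⟩

lemma adj_par (r : V) {u w : V} (h : G.Adj u w) :
    (G.dist u r ≠ 0 ∧ parFn G hT r u = w) ∨ (G.dist w r ≠ 0 ∧ parFn G hT r w = u) := by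
  rcases adj_dist_dichotomy G hT (r := r) h with hc | hc
  · right
    constructor
    · omega
    · exact (down_eq G hT h.symm hc.symm).symm
  · left
    constructor
    · omega
    · exact (down_eq G hT h hc.symm).symm

end Graph

section STO
variable {V : Type*}
theorem TreeData.key_STO (T : TreeData V) :
    IsStrictTotalOrder V (fun a b => List.Lex (· < ·) (T.key a) (T.key b)) where
  trichotomous := fun a b hab hba => by
    rcases trichotomous_of (List.Lex (· < ·) : List ℕ∞ → List ℕ∞ → Prop) (T.key a) (T.key b)
      with h | h | h
    · exact absurd h hab
    · exact T.key_inj a b h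
    · exact absurd h hba
  irrefl := fun a h => asymm h h
  trans := fun a b c h1 h2 => List.lex_trans lt_trans h1 h2
end STO

theorem thinness_diameter_bound' {V : Type*} [Fintype V] (G : SimpleGraph V) (hT : G.IsTree)
    (d : ℕ) (hd : IsGreatest {n | ∃ u v : V, G.dist u v = n} d) :
    Thinness G ≤ (d + 4) / 4 := by
  classical
  obtain ⟨⟨u₀, w₀, hdist⟩, hub'⟩ := hd
  have hub : ∀ x y : V, G.dist x y ≤ d := fun x y => hub' ⟨x, y, rfl⟩
  have hconn := hT.isConnected
  set p0 : G.Walk u₀ w₀ := thePath G hT u₀ w₀ with hp0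
  have hplen : p0.length = d := by rw [hp0, length_thePath, hdist]
  have hA : ∀ j, j ≤ d → G.dist u₀ (p0.getVert j) ≤ j := by
    intro j
    induction j with
    | zero => intro _; simp [SimpleGraph.Walk.getVert_zero, SimpleGraph.dist_self]
    | succ j ih =>
      intro hj
      have h1 := ih (by omega)
      have hadj : G.Adj (p0.getVert j) (p0.getVert (j+1)) :=
        p0.adj_getVert_succ (by omega)
      have h2 : G.dist (p0.getVert j) (p0.getVert (j+1)) ≤ 1 := by
        have := SimpleGraph.dist_le (SimpleGraph.Walk.cons hadj SimpleGraph.Walk.nil)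
        simpa using this
      have h3 := hconn.dist_triangle (u := u₀) (v := p0.getVert j) (w := p0.getVert (j+1))
      omega
  have hB : ∀ k j, j + k = d → G.dist (p0.getVert j) w₀ ≤ k := by
    intro k
    induction k with
    | zero =>
      intro j hj
      have hjd : j = d := by omega
      subst hjd
      rw [← hplen, SimpleGraph.Walk.getVert_length]
      simp [SimpleGraph.dist_self]
    | succ k ih =>
      intro j hj
      have hadj : G.Adj (p0.getVert j) (p0.getVert (j+1)) :=
        p0.adj_getVert_succ (by omega)
      have h2 : G.dist (p0.getVert j) (p0.getVert (j+1)) ≤ 1 := by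
        have := SimpleGraph.dist_le (SimpleGraph.Walk.cons hadj SimpleGraph.Walk.nil)
        simpa using this
      have h3 := hconn.dist_triangle (u := p0.getVert j) (v := p0.getVert (j+1)) (w := w₀)
      have h4 := ih (j+1) (by omega)
      omega
  have hspine_dist : ∀ j, j ≤ d → G.dist u₀ (p0.getVert j) = j := by
    intro j hj
    have h1 := hA j hj
    have h2 := hB (d - j) j (by omega)
    have h3 := hconn.dist_triangle (u := u₀) (v := p0.getVert j) (w := w₀)
    rw [hdist] at h3
    omega
  set T : TreeData V := {
    par := parFn G hT u₀
    dep := fun v => G.dist v u₀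
    root := u₀
    spine := fun j => p0.getVert j
    d := d
    enc := fun v => (Fintype.equivFin V v : ℕ)
    hpar := fun v hv => (parFn_spec G hT hv).2
    hroot := fun v hv => (hconn.dist_eq_zero_iff).mp hv
    hspine_dep := by
      intro j hj
      show G.dist (p0.getVert j) u₀ = j
      rw [SimpleGraph.dist_comm]
      exact hspine_dist j hj
    hspine0 := SimpleGraph.Walk.getVert_zero p0
    hspine_par := by
      intro j hj hj0
      have hadj : G.Adj (p0.getVert (j-1)) (p0.getVert (j-1+1)) :=
        p0.adj_getVert_succ (by omega)
      have hj1 : j - 1 + 1 = j := by omega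
      rw [hj1] at hadj
      refine (down_eq G hT hadj.symm ?_).symm
      show G.dist (p0.getVert (j-1)) u₀ + 1 = G.dist (p0.getVert j) u₀
      rw [SimpleGraph.dist_comm (u := p0.getVert (j-1)) (v := u₀),
        SimpleGraph.dist_comm (u := p0.getVert j) (v := u₀),
        hspine_dist _ hj, hspine_dist _ (show j - 1 ≤ d by omega)]
      omega
    henc := fun a b hab => (Fintype.equivFin V).injective (Fin.val_injective hab)
  } with hTdef
  have hTd : T.d = d := rfl
  have hAdjP : ∀ u w, G.Adj u w → (T.dep u ≠ 0 ∧ T.par u = w) ∨ (T.dep w ≠ 0 ∧ T.par w = u) :=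
    fun u w h => adj_par G hT u₀ h
  have hPAdj : ∀ x, T.dep x ≠ 0 → G.Adj x (T.par x) := fun x hx => (parFn_spec G hT hx).1
  have hw0 : T.spine T.d = w₀ := by
    show p0.getVert d = w₀
    rw [← hplen]
    exact SimpleGraph.Walk.getVert_length p0
  have hmain : ∀ n v, G.dist v w₀ = n → T.depth v + (d - T.iv v) ≤ n := by
    intro n
    induction n using Nat.strong_induction_on with
    | _ n ih =>
      intro v hv
      by_cases hvw : v = w₀
      · subst hvw
        rw [SimpleGraph.dist_self] at hv
        have h1 : T.depth v = 0 := by rw [← hw0]; exact T.depth_spine T.d le_rfl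
        have h2 : T.iv v = T.d := by rw [← hw0]; exact T.iv_spine T.d le_rfl
        omega
      · have hdnz : G.dist v w₀ ≠ 0 := fun h0 => hvw ((hconn.dist_eq_zero_iff).mp h0)
        obtain ⟨y, hy, hyd⟩ := exists_step G hT v w₀ hdnz
        have hn0 : n ≠ 0 := by omega
        have ihy := ih (n-1) (by omega) y (by omega)
        rcases hAdjP v y hy with ⟨hdv, hpv⟩ | ⟨hdy, hpy⟩
        · by_cases hdvz : T.depth v = 0
          · have hive : T.iv v = T.dep v := by
              have := T.iv_le_dep v
              rw [TreeData.depth] at hdvz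
              omega
            have hivne : T.iv v ≠ 0 := by omega
            have hy' : y = T.spine (T.iv v - 1) := by
              rw [← hpv]
              conv_lhs => rw [T.on_spine_eq v hdvz]
              rw [T.hspine_par _ (T.iv_le v) hivne]
            have hle' : T.iv v - 1 ≤ T.d := by have := T.iv_le v; omega
            have hivy : T.iv y = T.iv v - 1 := by rw [hy']; exact T.iv_spine _ hle'
            have hdepy : T.depth y = 0 := by rw [hy']; exact T.depth_spine _ hle'
            have h5 := T.iv_le v
            omega
          · have hivy : T.iv y = T.iv v := by rw [← hpv]; exact T.iv_par v hdvz
            have hdepy : T.depth y + 1 = T.depth v := by rw [← hpv]; exact T.depth_par v hdvz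
            omega
        · by_cases hdyz : T.depth y = 0
          · have hivey : T.iv y = T.dep y := by
              have := T.iv_le_dep y
              rw [TreeData.depth] at hdyz
              omega
            have hivyne : T.iv y ≠ 0 := by omega
            have hv' : v = T.spine (T.iv y - 1) := by
              rw [← hpy]
              conv_lhs => rw [T.on_spine_eq y hdyz]
              rw [T.hspine_par _ (T.iv_le y) hivyne]
            have hle' : T.iv y - 1 ≤ T.d := by have := T.iv_le y; omega
            have hivv : T.iv v = T.iv y - 1 := by rw [hv']; exact T.iv_spine _ hle'
            have hdepv : T.depth v = 0 := by rw [hv']; exact T.depth_spine _ hle'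
            have h5 := T.iv_le y
            omega
          · have hivv : T.iv v = T.iv y := by rw [← hpy]; exact T.iv_par y hdyz
            have hdepv : T.depth v + 1 = T.depth y := by rw [← hpy]; exact T.depth_par y hdyz
            omega
  have hbound : ∀ v, 2 * T.depth v ≤ d := by
    intro v
    have h1 := hmain (G.dist v w₀) v rfl
    have h2 := hub v w₀
    have h3 := hub v u₀
    have h4 := T.iv_le_dep v
    have h5 := T.iv_le v
    have h6 : T.depth v = T.dep v - T.iv v := rfl
    have h7 : T.dep v = G.dist v u₀ := rfl
    omega
  have hkd : ∀ v, T.depth v / 2 < d / 4 + 1 := by intro v; have := hbound v; omega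
  have hkthin : IsKThin G (d / 4 + 1) := by
    refine ⟨fun a b => List.Lex (· < ·) (T.key a) (T.key b), T.key_STO,
      fun v => ⟨T.depth v / 2, hkd v⟩, ?_⟩
    intro u v w h1 h2 hC hadj
    have hcls : T.depth u / 2 = T.depth v / 2 := by
      have := congrArg Fin.val hC
      simpa using this
    exact T.key_consistent G.Adj hAdjP hPAdj h1 h2 hcls hadj
  have hle : Thinness G ≤ d / 4 + 1 := Nat.sInf_le hkthin
  have h44 : (d + 4) / 4 = d / 4 + 1 := by omega
  omega

theorem thinness_diameter_bound [Fintype V] (G : SimpleGraph V) (hT : G.IsTree)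
    (d : ℕ) (hd : IsGreatest {n | ∃ u v : V, G.dist u v = n} d) :
    Thinness G ≤ (d + 4) / 4 :=
  thinness_diameter_bound' G hT d hd
end

section
/- Let T_r be a non-trivial rooted tree and let k be the maximum thinness over all child subtrees of the root r. Then k ≤ thin(T_r) ≤ k + 1. -/
open SimpleGraph

variable {V : Type*}

/-! ### Auxiliary lemmas -/

lemma isKThin_mono {G : SimpleGraph V} {m k : ℕ} (h : IsKThin G m) (hmk : m ≤ k) :
    IsKThin G k := by
  obtain ⟨r, hr, C, hC⟩ := h
  exact ⟨r, hr, fun v => Fin.castLE hmk (C v),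
    fun u v w h1 h2 h3 h4 => hC u v w h1 h2 (Fin.castLE_injective hmk h3) h4⟩

lemma isKThin_card [Fintype V] (G : SimpleGraph V) : IsKThin G (Fintype.card V) := by
  classical
  let e := Fintype.equivFin V
  refine ⟨fun a b => e a < e b, { trichotomous := ?_, irrefl := ?_, trans := ?_ }, fun a => e a, ?_⟩
  · intro a b
    suffices H : e a < e b ∨ a = b ∨ e b < e a from
      fun h1 h2 => H.elim (fun h => absurd h h1) (fun H => H.elim id (fun h => absurd h h2))
    rcases lt_trichotomy (e a) (e b) with h | h | h
    · exact Or.inl h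
    · exact Or.inr (Or.inl (e.injective h))
    · exact Or.inr (Or.inr h)
  · intro a; exact lt_irrefl _
  · intro a b c hab hbc; exact lt_trans hab hbc
  · intro u v w h1 _ h3 _
    exact absurd h1 (by rw [e.injective h3]; exact lt_irrefl _)

lemma thin_isKThin [Fintype V] (G : SimpleGraph V) : IsKThin G (Thinness G) := by
  have hne : {k | IsKThin G k}.Nonempty := ⟨Fintype.card V, isKThin_card G⟩
  exact Nat.sInf_mem hne

lemma isKThin_induce {G : SimpleGraph V} {k : ℕ} (S : Set V) (h : IsKThin G k) :
    IsKThin (G.induce S) k := by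
  obtain ⟨r, hr, C, hC⟩ := h
  refine ⟨fun a b => r a b, { trichotomous := ?_, irrefl := ?_, trans := ?_ }, fun a => C a, ?_⟩
  · intro a b
    suffices H : r a b ∨ a = b ∨ r b a from
      fun h1 h2 => H.elim (fun h => absurd h h1) (fun H => H.elim id (fun h => absurd h h2))
    rcases (haveI := hr; trichotomous_of r a.1 b.1) with h | h | h
    · exact Or.inl h
    · exact Or.inr (Or.inl (Subtype.ext h))
    · exact Or.inr (Or.inr h)
  · intro a; exact hr.irrefl a.1
  · intro a b c hab hbc; exact hr.trans _ _ _ hab hbc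
  · intro u v w h1 h2 h3 h4
    exact hC u.1 v.1 w.1 h1 h2 h3 h4

lemma thin_induce_le [Fintype V] (G : SimpleGraph V) (S : Set V) :
    Thinness (G.induce S) ≤ Thinness G :=
  Nat.sInf_le (isKThin_induce S (thin_isKThin G))

lemma tree_path_length {G : SimpleGraph V} (hT : G.IsTree) {a b : V}
    (p : G.Walk a b) (hp : p.IsPath) : p.length = G.dist a b := by
  obtain ⟨q, hq, hql⟩ := hT.isConnected.exists_path_of_dist a b
  rw [← hql, (hT.existsUnique_path a b).unique hp hq]

lemma exists_child {G : SimpleGraph V} (hc : G.Connected) {rt u : V} (hu : u ≠ rt) :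
    ∃ v, G.Adj rt v ∧ u ∈ Subtree G rt v := by
  have hd : 0 < G.dist rt u := hc.pos_dist_of_ne (Ne.symm hu)
  obtain ⟨p, hp⟩ := hc.exists_walk_length_eq_dist rt u
  cases p with
  | nil => simp at hu
  | @cons _ v _ h q =>
    refine ⟨v, h, ?_⟩
    have h1 : G.dist rt v = 1 := (dist_eq_one_iff_adj (G := G)).2 h
    have h2 : G.dist v u ≤ q.length := G.dist_le q
    have h3 : G.dist rt u ≤ G.dist rt v + G.dist v u := hc.dist_triangle
    have h4 : q.length + 1 = G.dist rt u := by simpa using hp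
    show G.dist rt v + G.dist v u = G.dist rt u
    omega

lemma subtree_path {G : SimpleGraph V} (hc : G.Connected) {rt v u : V}
    (hu : u ∈ Subtree G rt v) :
    ∃ p : G.Walk rt u, p.IsPath ∧ v ∈ p.support ∧ p.length = G.dist rt u := by
  obtain ⟨p1, _, h1⟩ := hc.exists_path_of_dist rt v
  obtain ⟨p2, _, h2⟩ := hc.exists_path_of_dist v u
  have hlen : (p1.append p2).length = G.dist rt u := by
    rw [SimpleGraph.Walk.length_append, h1, h2]; exact hu
  exact ⟨p1.append p2, SimpleGraph.Walk.isPath_of_length_eq_dist _ hlen,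
    (SimpleGraph.Walk.mem_support_append_iff _ _).2 (Or.inl p1.end_mem_support), hlen⟩

lemma walk_length_one_support {G : SimpleGraph V} {a b : V} (q : G.Walk a b)
    (h : q.length = 1) : q.support = [a, b] := by
  cases q with
  | nil => simp at h
  | cons h' q' =>
    cases q' with
    | nil => simp
    | cons h'' q'' => simp [SimpleGraph.Walk.length_cons] at h

lemma subtree_unique {G : SimpleGraph V} (hT : G.IsTree) {rt u v v' : V}
    (hv : G.Adj rt v) (hv' : G.Adj rt v')
    (hu : u ∈ Subtree G rt v) (hu' : u ∈ Subtree G rt v') : v = v' := by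
  classical
  have hc := hT.isConnected
  obtain ⟨p, hp, hvp, hpl⟩ := subtree_path hc hu
  obtain ⟨p', hp', hvp', _⟩ := subtree_path hc hu'
  have hpp : p' = p := (hT.existsUnique_path rt u).unique hp' hp
  rw [hpp] at hvp'
  -- take the initial segments up to v and v'
  have h1 : (p.takeUntil v hvp).length = 1 := by
    rw [tree_path_length hT _ (hp.takeUntil hvp)]
    exact (dist_eq_one_iff_adj (G := G)).2 hv
  have h1' : (p.takeUntil v' hvp').length = 1 := by
    rw [tree_path_length hT _ (hp.takeUntil hvp')]
    exact (dist_eq_one_iff_adj (G := G)).2 hv'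
  have e1 : p.support = [rt, v] ++ (p.dropUntil v hvp).support.tail := by
    conv_lhs => rw [← p.take_spec hvp]
    rw [SimpleGraph.Walk.support_append, walk_length_one_support _ h1]
  have e1' : p.support = [rt, v'] ++ (p.dropUntil v' hvp').support.tail := by
    conv_lhs => rw [← p.take_spec hvp']
    rw [SimpleGraph.Walk.support_append, walk_length_one_support _ h1']
  rw [e1'] at e1
  have := e1.symm
  exact (List.cons.inj (List.cons.inj this).2).1

lemma concat_isPath {G : SimpleGraph V} {a b c : V} {p : G.Walk a b}
    (hp : p.IsPath) (h : G.Adj b c) (hc : c ∉ p.support) : (p.concat h).IsPath := by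
  have hrev : (p.concat h).reverse.IsPath := by
    rw [SimpleGraph.Walk.reverse_concat]
    rw [SimpleGraph.Walk.cons_isPath_iff]
    refine ⟨hp.reverse, ?_⟩
    rw [SimpleGraph.Walk.support_reverse]
    simpa using hc
  simpa [SimpleGraph.Walk.concat] using hrev.reverse

lemma subtree_adj {G : SimpleGraph V} (hT : G.IsTree) {rt u w v : V}
    (huw : G.Adj u w) (hu : u ≠ rt) (hw : w ≠ rt) (hv : G.Adj rt v)
    (hmem : u ∈ Subtree G rt v) : w ∈ Subtree G rt v := by
  classical
  have hc := hT.isConnected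
  have hdv : G.dist rt v = 1 := (dist_eq_one_iff_adj (G := G)).2 hv
  have hduw : G.dist u w = 1 := (dist_eq_one_iff_adj (G := G)).2 huw
  have hmem' : G.dist rt v + G.dist v u = G.dist rt u := hmem
  have htri1 : G.dist rt w ≤ G.dist rt v + G.dist v w := hc.dist_triangle
  have htri2 : G.dist v w ≤ G.dist v u + G.dist u w := hc.dist_triangle
  have htri3 : G.dist rt w ≤ G.dist rt u + G.dist u w := hc.dist_triangle
  rcases lt_or_ge (G.dist rt u) (G.dist rt w) with hlt | hge
  · show G.dist rt v + G.dist v w = G.dist rt w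
    omega
  · -- dist rt w ≤ dist rt u
    obtain ⟨q, hq, hql⟩ := hc.exists_path_of_dist rt w
    have huq : u ∉ q.support := by
      intro hmemq
      have h1 : G.dist rt u ≤ (q.takeUntil u hmemq).length := G.dist_le _
      have h2 : G.dist u w ≤ (q.dropUntil u hmemq).length := G.dist_le _
      have h3 : (q.takeUntil u hmemq).length + (q.dropUntil u hmemq).length = q.length := by
        rw [← SimpleGraph.Walk.length_append, q.take_spec hmemq]
      omega
    have hp' : (q.concat huw.symm).IsPath := concat_isPath hq huw.symm huq
    have hlen' : (q.concat huw.symm).length = G.dist rt w + 1 := by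
      rw [SimpleGraph.Walk.length_concat, hql]
    have hdu : G.dist rt w + 1 = G.dist rt u := by
      rw [← hlen', tree_path_length hT _ hp']
    obtain ⟨p2, hp2, hvp2, _⟩ := subtree_path hc hmem
    have hpe : p2 = q.concat huw.symm := (hT.existsUnique_path rt u).unique hp2 hp'
    rw [hpe] at hvp2
    rw [SimpleGraph.Walk.support_concat, List.mem_append] at hvp2
    rcases hvp2 with hvq | hvu
    on_goal 2 => rw [List.mem_singleton] at hvu
    · -- v in support of q
      have h1 : G.dist rt v ≤ (q.takeUntil v hvq).length := G.dist_le _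
      have h2 : G.dist v w ≤ (q.dropUntil v hvq).length := G.dist_le _
      have h3 : (q.takeUntil v hvq).length + (q.dropUntil v hvq).length = q.length := by
        rw [← SimpleGraph.Walk.length_append, q.take_spec hvq]
      show G.dist rt v + G.dist v w = G.dist rt w
      omega
    · -- v = u : then w = rt, contradiction
      exfalso
      subst hvu
      have hw0 : G.dist rt w = 0 := by omega
      exact hw ((hc.dist_eq_zero_iff.1 hw0).symm)

theorem rooted_tree_bound [Fintype V] (G : SimpleGraph V) (hT : G.IsTree)
    (rt : V) (hn : 2 ≤ Fintype.card V) (k : ℕ)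
    (hk : IsGreatest {m | ∃ v : V, G.Adj rt v ∧ Thinness (G.induce (Subtree G rt v)) = m} k) :
    k ≤ Thinness G ∧ Thinness G ≤ k + 1 := by
  classical
  have hc := hT.isConnected
  obtain ⟨v0, hv0, hv0t⟩ := hk.1
  constructor
  · rw [← hv0t]; exact thin_induce_le G _
  · -- upper bound
    -- dispatch k = 0
    rcases Nat.eq_zero_or_pos k with hk0 | hkpos
    · exfalso
      haveI : Fintype ↥(Subtree G rt v0) := Fintype.ofFinite _
      have h0 : IsKThin (G.induce (Subtree G rt v0)) 0 := by
        rw [← hk0, ← hv0t]; exact thin_isKThin _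
      obtain ⟨r, _, C, _⟩ := h0
      exact Fin.elim0 (C ⟨v0, by simp [Subtree]⟩)
    apply Nat.sInf_le
    -- schemes on child subtrees
    have hscheme : ∀ v : V, ∃ (r : ↥(Subtree G rt v) → ↥(Subtree G rt v) → Prop)
        (C : ↥(Subtree G rt v) → Fin k), G.Adj rt v →
        IsStrictTotalOrder _ r ∧ Consistent (G.induce (Subtree G rt v)) r C := by
      intro v
      by_cases hv : G.Adj rt v
      · haveI : Fintype ↥(Subtree G rt v) := Fintype.ofFinite _
        have h1 : Thinness (G.induce (Subtree G rt v)) ≤ k := hk.2 ⟨v, hv, rfl⟩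
        obtain ⟨r, hr, C, hC⟩ := isKThin_mono (thin_isKThin (G.induce (Subtree G rt v))) h1
        exact ⟨r, C, fun _ => ⟨hr, hC⟩⟩
      · exact ⟨fun _ _ => False, fun _ => ⟨0, hkpos⟩, fun h => absurd h hv⟩
    choose r C hrc using hscheme
    -- child assignment
    have hPex : ∀ u : V, ∃ v, u ≠ rt → (G.Adj rt v ∧ u ∈ Subtree G rt v) := by
      intro u
      by_cases hu : u = rt
      · exact ⟨rt, fun h => absurd hu h⟩
      · obtain ⟨v, hv, hm⟩ := exists_child hc hu
        exact ⟨v, fun _ => ⟨hv, hm⟩⟩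
    choose P hP using hPex
    have hPadj : ∀ u, u ≠ rt → G.Adj rt (P u) := fun u hu => (hP u hu).1
    have hPmem : ∀ u (hu : u ≠ rt), u ∈ Subtree G rt (P u) := fun u hu => (hP u hu).2
    have hPu : ∀ u (hu : u ≠ rt) v, G.Adj rt v → u ∈ Subtree G rt v → P u = v :=
      fun u hu v hv hm => subtree_unique hT (hPadj u hu) hv (hPmem u hu) hm
    -- global order and coloring
    let e := Fintype.equivFin V
    let ordIn : V → V → V → Prop := fun v a b =>
      ∃ (ha : a ∈ Subtree G rt v) (hb : b ∈ Subtree G rt v), r v ⟨a, ha⟩ ⟨b, hb⟩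
    let ord : V → V → Prop := fun a b =>
      (a = rt ∧ b ≠ rt) ∨ (a ≠ rt ∧ b ≠ rt ∧
        (e (P a) < e (P b) ∨ (P a = P b ∧ ordIn (P a) a b)))
    let colIn : V → V → Fin (k + 1) := fun v a =>
      if h : a ∈ Subtree G rt v then Fin.castSucc (C v ⟨a, h⟩) else Fin.last k
    let col : V → Fin (k + 1) := fun a => if a = rt then Fin.last k else colIn (P a) a
    refine ⟨ord, ?_, col, ?_⟩
    · -- strict total order
      refine { trichotomous := ?_, irrefl := ?_, trans := ?_ }
      · -- trichotomous
        intro a b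
        suffices H : ord a b ∨ a = b ∨ ord b a from
          fun h1 h2 => H.elim (fun h => absurd h h1) (fun H => H.elim id (fun h => absurd h h2))
        by_cases ha : a = rt <;> by_cases hb : b = rt
        · subst ha; subst hb; exact Or.inr (Or.inl rfl)
        · exact Or.inl (Or.inl ⟨ha, hb⟩)
        · exact Or.inr (Or.inr (Or.inl ⟨hb, ha⟩))
        · rcases lt_trichotomy (e (P a)) (e (P b)) with h | h | h
          · exact Or.inl (Or.inr ⟨ha, hb, Or.inl h⟩)
          · have hPab : P a = P b := e.injective h
            have hma : a ∈ Subtree G rt (P a) := hPmem a ha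
            have hmb : b ∈ Subtree G rt (P a) := by rw [hPab]; exact hPmem b hb
            have hsto := (hrc (P a) (hPadj a ha)).1
            rcases (haveI := hsto; trichotomous_of (r (P a)) ⟨a, hma⟩ ⟨b, hmb⟩) with h' | h' | h'
            · exact Or.inl (Or.inr ⟨ha, hb, Or.inr ⟨hPab, hma, hmb, h'⟩⟩)
            · exact Or.inr (Or.inl (congrArg Subtype.val h'))
            · refine Or.inr (Or.inr (Or.inr ⟨hb, ha, Or.inr ⟨hPab.symm, ?_⟩⟩))
              show ordIn (P b) b a
              rw [← hPab]
              exact ⟨hmb, hma, h'⟩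
          · exact Or.inr (Or.inr (Or.inr ⟨hb, ha, Or.inl h⟩))
      · -- irrefl
        intro a h
        rcases h with ⟨h1, h2⟩ | ⟨h1, _, h3 | ⟨_, ha, hb, h4⟩⟩
        · exact h2 h1
        · exact lt_irrefl _ h3
        · exact (hrc (P a) (hPadj a h1)).1.irrefl _ h4
      · -- trans
        intro a b c hab hbc
        rcases hab with ⟨ha, hb⟩ | ⟨ha, hb, hab'⟩
        · rcases hbc with ⟨hb', _⟩ | ⟨_, hcne, _⟩
          · exact absurd hb' hb
          · exact Or.inl ⟨ha, hcne⟩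
        · rcases hbc with ⟨hb', _⟩ | ⟨_, hcne, hbc'⟩
          · exact absurd hb' hb
          · refine Or.inr ⟨ha, hcne, ?_⟩
            rcases hab' with h1 | ⟨h1, hin1⟩
            · rcases hbc' with h2 | ⟨h2, hin2⟩
              · exact Or.inl (lt_trans h1 h2)
              · exact Or.inl (h2 ▸ h1)
            · rcases hbc' with h2 | ⟨h2, hin2⟩
              · exact Or.inl (h1 ▸ h2)
              · refine Or.inr ⟨h1.trans h2, ?_⟩
                rw [← h1] at hin2
                obtain ⟨hma, hmb, hr1⟩ := hin1
                obtain ⟨hmb', hmc, hr2⟩ := hin2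
                exact ⟨hma, hmc, (hrc (P a) (hPadj a ha)).1.trans _ _ _ hr1 hr2⟩
    · -- consistent
      intro u v w huv hvw hcol hadj
      -- v ≠ rt and w ≠ rt from the order
      have hvne : v ≠ rt := by
        rcases huv with ⟨_, h⟩ | ⟨_, h, _⟩ <;> exact h
      have hwne : w ≠ rt := by
        rcases hvw with ⟨_, h⟩ | ⟨_, h, _⟩ <;> exact h
      have hune : u ≠ rt := by
        intro hu
        rw [show col u = Fin.last k from if_pos hu] at hcol
        have : col v = colIn (P v) v := if_neg hvne
        rw [this] at hcol
        have hmv : v ∈ Subtree G rt (P v) := hPmem v hvne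
        rw [show colIn (P v) v = Fin.castSucc (C (P v) ⟨v, hmv⟩) from dif_pos hmv] at hcol
        exact absurd hcol.symm (Fin.ne_of_lt (Fin.castSucc_lt_last _))
      -- w belongs to u's subtree
      have hwmem : w ∈ Subtree G rt (P u) := subtree_adj hT hadj hune hwne (hPadj u hune) (hPmem u hune)
      have hPwu : P w = P u := hPu w hwne (P u) (hPadj u hune) hwmem
      -- analyze order relations
      rcases huv with ⟨h, _⟩ | ⟨_, _, huv'⟩
      · exact absurd h hune
      rcases hvw with ⟨h, _⟩ | ⟨_, _, hvw'⟩
      · exact absurd h hvne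
      have hPuv : P u = P v ∧ ordIn (P u) u v := by
        rcases huv' with h1 | h1
        · exfalso
          rcases hvw' with h2 | ⟨h2, _⟩
          · rw [hPwu] at h2; exact lt_irrefl _ (lt_trans h1 h2)
          · rw [h2, hPwu] at h1; exact lt_irrefl _ h1
        · exact h1
      have hPuv1 := hPuv.1
      obtain ⟨hmu, hmv, hr1⟩ := hPuv.2
      have hrvw : ordIn (P u) v w := by
        rcases hvw' with h2 | ⟨h2, hin⟩
        · exfalso; rw [hPwu, ← hPuv1] at h2; exact lt_irrefl _ h2
        · rw [← hPuv1] at hin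
          exact hin
      obtain ⟨hmv', hmw, hr2⟩ := hrvw
      -- colors agree in the subtree scheme
      have hcu : col u = colIn (P u) u := if_neg hune
      have hcv : col v = colIn (P v) v := if_neg hvne
      rw [hcu, hcv, ← hPuv1] at hcol
      rw [show colIn (P u) u = Fin.castSucc (C (P u) ⟨u, hmu⟩) from dif_pos hmu,
        show colIn (P u) v = Fin.castSucc (C (P u) ⟨v, hmv⟩) from dif_pos hmv] at hcol
      have hCeq : C (P u) ⟨u, hmu⟩ = C (P u) ⟨v, hmv⟩ := Fin.castSucc_injective _ hcol
      have hcons := (hrc (P u) (hPadj u hune)).2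
      have hadj' : (G.induce (Subtree G rt (P u))).Adj ⟨u, hmu⟩ ⟨w, hwmem⟩ := by
        simpa using hadj
      have := hcons ⟨u, hmu⟩ ⟨v, hmv⟩ ⟨w, hwmem⟩ hr1 hr2 hCeq hadj'
      simpa using this
end

section
/- Let T_r be a rooted tree with thinness k and critical vertex x. If v is an ancestor of x, then x is also a critical vertex of the complete rooted subtree of T_r rooted at v. -/
open SimpleGraph

variable {V : Type*}

lemma isKThin_of_embed {W : Type*} (G : SimpleGraph V) (H : SimpleGraph W) (f : W → V)
    (hf : Function.Injective f) (hadj : ∀ a b, H.Adj a b ↔ G.Adj (f a) (f b)) {k : ℕ}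
    (h : IsKThin G k) : IsKThin H k := by
  obtain ⟨r, hr, C, hC⟩ := h
  refine ⟨fun a b => r (f a) (f b), ?_, C ∘ f, ?_⟩
  · exact { trichotomous := fun a b h1 h2 => hf (hr.trichotomous (f a) (f b) h1 h2),
            irrefl := fun a => hr.irrefl (f a),
            trans := fun a b c h1 h2 => hr.trans _ _ _ h1 h2 }
  · intro a b c h1 h2 h3 h4
    exact (hadj b c).2 (hC _ _ _ h1 h2 h3 ((hadj a c).1 h4))

lemma isKThin_exists (G : SimpleGraph V) [Finite V] : ∃ k, IsKThin G k := by
  obtain ⟨n, ⟨e⟩⟩ := Finite.exists_equiv_fin V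
  refine ⟨n, fun a b => e a < e b, ?_, e, ?_⟩
  · exact { trichotomous := fun a b h1 h2 =>
              e.injective (le_antisymm (not_lt.1 h2) (not_lt.1 h1)),
            irrefl := fun a => lt_irrefl _,
            trans := fun a b c => lt_trans }
  · intro a b c h1 h2 h3 h4
    exact (ne_of_lt h1 h3).elim

lemma thinness_isKThin (G : SimpleGraph V) [Finite V] : IsKThin G (Thinness G) :=
  Nat.sInf_mem (isKThin_exists G)

lemma thinness_le_of_embed {W : Type*} (G : SimpleGraph V) (H : SimpleGraph W) [Finite V]
    (f : W → V) (hf : Function.Injective f) (hadj : ∀ a b, H.Adj a b ↔ G.Adj (f a) (f b)) :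
    Thinness H ≤ Thinness G :=
  Nat.sInf_le (isKThin_of_embed G H f hf hadj (thinness_isKThin G))

section TreeLemmas

variable {G : SimpleGraph V}

lemma path_eq (hT : G.IsTree) {a b : V} {p q : G.Walk a b} (hp : p.IsPath) (hq : q.IsPath) :
    p = q := by
  obtain ⟨r, -, hr⟩ := hT.existsUnique_path a b
  rw [hr p hp, hr q hq]

lemma dist_add_dist_of_mem_support {a b z : V} (hc : G.Connected) (p : G.Walk a b)
    (hl : p.length = G.dist a b) (hz : z ∈ p.support) :
    G.dist a z + G.dist z b = G.dist a b := by
  classical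
  have h1 := SimpleGraph.dist_le (p.takeUntil z hz)
  have h2 := SimpleGraph.dist_le (p.dropUntil z hz)
  have h3 := congrArg Walk.length (p.take_spec hz)
  rw [Walk.length_append] at h3
  have h4 := hc.dist_triangle (u := a) (v := z) (w := b)
  omega

lemma adj_dist_ne (hT : G.IsTree) (rt : V) {a b : V} (hab : G.Adj a b) :
    G.dist rt a ≠ G.dist rt b := by
  intro h
  obtain ⟨p, hp, hlp⟩ := hT.isConnected.exists_path_of_dist rt a
  have hbp : b ∉ p.support := by
    intro hb
    have h1 := dist_add_dist_of_mem_support hT.isConnected p hlp hb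
    have hba : G.dist b a = 0 := by omega
    exact hab.ne' (hT.isConnected.dist_eq_zero_iff.mp hba)
  obtain ⟨q, hq, hlq⟩ := hT.isConnected.exists_path_of_dist rt b
  have hcp : (p.concat hab).IsPath := by
    rw [← Walk.isPath_reverse_iff, Walk.reverse_concat, Walk.cons_isPath_iff]
    exact ⟨hp.reverse, by simpa using hbp⟩
  have heq := path_eq hT hcp hq
  have hlen : (p.concat hab).length = q.length := by rw [heq]
  rw [Walk.length_concat, hlp, hlq] at hlen
  omega

lemma parent_unique (hT : G.IsTree) (rt : V) {a b c : V} (hac : G.Adj a c) (hbc : G.Adj b c)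
    (ha : G.dist rt a + 1 = G.dist rt c) (hb : G.dist rt b + 1 = G.dist rt c) : a = b := by
  obtain ⟨p, hp, hlp⟩ := hT.isConnected.exists_path_of_dist rt a
  obtain ⟨q, hq, hlq⟩ := hT.isConnected.exists_path_of_dist rt b
  have hcp : c ∉ p.support := by
    intro hcs
    have h1 := dist_add_dist_of_mem_support hT.isConnected p hlp hcs
    omega
  have hcq : c ∉ q.support := by
    intro hcs
    have h1 := dist_add_dist_of_mem_support hT.isConnected q hlq hcs
    omega
  have hp2 : (p.concat hac).IsPath := by
    rw [← Walk.isPath_reverse_iff, Walk.reverse_concat, Walk.cons_isPath_iff]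
    exact ⟨hp.reverse, by simpa using hcp⟩
  have hq2 : (q.concat hbc).IsPath := by
    rw [← Walk.isPath_reverse_iff, Walk.reverse_concat, Walk.cons_isPath_iff]
    exact ⟨hq.reverse, by simpa using hcq⟩
  have heq := path_eq hT hp2 hq2
  have hedge : s(a, c) ∈ (q.concat hbc).edges := by
    rw [← heq, Walk.edges_concat]
    simp
  rw [Walk.edges_concat, List.concat_eq_append, List.mem_append] at hedge
  rcases hedge with h | h
  · exact absurd (Walk.snd_mem_support_of_mem_edges q h) hcq
  · simp only [List.mem_singleton, Sym2.eq_iff] at h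
    rcases h with ⟨h1, -⟩ | ⟨h1, h2⟩
    · exact h1
    · exact absurd h1 hac.ne
  
lemma adj_dist_cases (hT : G.IsTree) (rt : V) {a b : V} (hab : G.Adj a b) :
    G.dist rt a + 1 = G.dist rt b ∨ G.dist rt b + 1 = G.dist rt a := by
  have h1 := hT.isConnected.dist_triangle (u := rt) (v := a) (w := b)
  have h2 := hT.isConnected.dist_triangle (u := rt) (v := b) (w := a)
  have h3 : G.dist a b = 1 := dist_eq_one_iff_adj.2 hab
  have h4 : G.dist b a = 1 := dist_eq_one_iff_adj.2 hab.symm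
  have h5 := adj_dist_ne hT rt hab
  omega

end TreeLemmas

section SubtreeLemmas

variable {G : SimpleGraph V}

lemma self_mem_subtree (hc : G.Connected) (rt v : V) : v ∈ Subtree G rt v := by
  simp [Subtree]

lemma subtree_trans (hc : G.Connected) {rt v a b : V} (ha : a ∈ Subtree G rt v)
    (hb : b ∈ Subtree G rt a) : b ∈ Subtree G rt v := by
  have h1 := hc.dist_triangle (u := rt) (v := v) (w := b)
  have h2 := hc.dist_triangle (u := v) (v := a) (w := b)
  simp only [Subtree, Set.mem_setOf_eq] at *
  omega

lemma child_mem_subtree (hc : G.Connected) {rt v a b : V} (ha : a ∈ Subtree G rt v)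
    (hab : G.Adj a b) (hd : G.dist rt a + 1 = G.dist rt b) : b ∈ Subtree G rt v := by
  apply subtree_trans hc ha
  show G.dist rt a + G.dist a b = G.dist rt b
  rw [dist_eq_one_iff_adj.2 hab]
  omega

lemma exists_induce_walk {S : Set V} {G : SimpleGraph V} {a b : V} (p : G.Walk a b)
    (hs : ∀ z ∈ p.support, z ∈ S) :
    ∃ q : (G.induce S).Walk ⟨a, hs a p.start_mem_support⟩ ⟨b, hs b p.end_mem_support⟩,
      q.length = p.length := by
  induction p with
  | nil => exact ⟨Walk.nil, rfl⟩
  | @cons u c b h p ih =>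
    obtain ⟨q, hq⟩ := ih (fun z hz => hs z (by simp [hz]))
    refine ⟨Walk.cons (by exact h) q, by exact congrArg (· + 1) hq⟩

def induceValHom (G : SimpleGraph V) (S : Set V) : G.induce S →g G where
  toFun := fun x => x.val
  map_rel' := fun h => h

lemma step_mem_subtree (hT : G.IsTree) {rt w u z' y : V} (hwu : G.Adj w u)
    (hd : G.dist rt w + 1 = G.dist rt u) (hz' : z' ∈ Subtree G rt u)
    (hadj : G.Adj z' y) (hne : s(z', y) ≠ s(w, u)) : y ∈ Subtree G rt u := by
  have hc := hT.isConnected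
  rcases adj_dist_cases hT rt hadj with h | h
  · exact child_mem_subtree hc hz' hadj h
  · by_cases hz'u : z' = u
    · subst hz'u
      have hyw : y = w := parent_unique hT rt hadj.symm hwu h hd
      subst hyw
      exact absurd (Sym2.eq_swap) hne
    · have hdzu : G.dist u z' ≠ 0 := by
        rw [dist_ne_zero_iff_ne_and_reachable]
        exact ⟨Ne.symm hz'u, hc.preconnected u z'⟩
      obtain ⟨p, hlp⟩ := (hc.preconnected u z').exists_walk_length_eq_dist
      obtain ⟨y', hadj', q, hq⟩ := Walk.exists_eq_cons_of_ne hz'u p.reverse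
      have hql : q.length + 1 = G.dist u z' := by
        have := congrArg Walk.length hq
        rw [Walk.length_reverse, Walk.length_cons] at this
        omega
      have hy'1 : G.dist u y' + 1 = G.dist u z' := by
        have h1 : G.dist y' u ≤ q.length := SimpleGraph.dist_le q
        have h2 := hc.dist_triangle (u := u) (v := y') (w := z')
        have h3 : G.dist y' z' = 1 := dist_eq_one_iff_adj.2 hadj'.symm
        have h4 : G.dist u y' = G.dist y' u := dist_comm
        omega
      have hy'sub : y' ∈ Subtree G rt u := by
        have h1 := hc.dist_triangle (u := rt) (v := u) (w := y')
        have h2 := hc.dist_triangle (u := rt) (v := y') (w := z')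
        have h3 : G.dist y' z' = 1 := dist_eq_one_iff_adj.2 hadj'.symm
        simp only [Subtree, Set.mem_setOf_eq] at *
        omega
      have hy : y = y' := by
        apply parent_unique hT rt hadj.symm hadj'.symm h
        have h2 := hz'
        simp only [Subtree, Set.mem_setOf_eq] at hy'sub h2
        omega
      subst hy
      exact hy'sub

lemma dangling_mem_subtree (hT : G.IsTree) {rt w u : V} (hwu : G.Adj w u)
    (hd : G.dist rt w + 1 = G.dist rt u) {z : V}
    (hz : (G.deleteEdges {s(w,u)}).Reachable u z) : z ∈ Subtree G rt u := by
  obtain ⟨p⟩ := hz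
  suffices H : ∀ (z' z : V) (p : (G.deleteEdges {s(w,u)}).Walk z' z),
      z' ∈ Subtree G rt u → z ∈ Subtree G rt u by
    exact H u z p (self_mem_subtree hT.isConnected rt u)
  intro z' z p
  induction p with
  | nil => exact id
  | @cons z' y z h p ih =>
    intro hz'
    rw [deleteEdges_adj] at h
    exact ih (step_mem_subtree hT hwu hd hz' h.1 (by simpa using h.2))

end SubtreeLemmas

section InduceLemmas

variable {G : SimpleGraph V}

lemma subtree_convex (hc : G.Connected) {rt v w z : V} (hw : w ∈ Subtree G rt v)
    (h1 : G.dist v z + G.dist z w = G.dist v w) : z ∈ Subtree G rt v := by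
  have h2 := hc.dist_triangle (u := rt) (v := v) (w := z)
  have h3 := hc.dist_triangle (u := rt) (v := z) (w := w)
  simp only [Subtree, Set.mem_setOf_eq] at *
  omega

lemma induce_dist_eq (hT : G.IsTree) {rt v : V} (hv : v ∈ Subtree G rt v) {w : V}
    (hw : w ∈ Subtree G rt v) :
    (G.induce (Subtree G rt v)).dist ⟨v, hv⟩ ⟨w, hw⟩ = G.dist v w := by
  have hc := hT.isConnected
  obtain ⟨p, hp, hlp⟩ := hc.exists_path_of_dist v w
  have hs : ∀ z ∈ p.support, z ∈ Subtree G rt v := fun z hz =>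
    subtree_convex hc hw (dist_add_dist_of_mem_support hc p hlp hz)
  obtain ⟨q, hq⟩ := exists_induce_walk p hs
  apply le_antisymm
  · calc (G.induce (Subtree G rt v)).dist ⟨v, hv⟩ ⟨w, hw⟩ ≤ q.length := SimpleGraph.dist_le q
    _ = G.dist v w := by rw [hq, hlp]
  · obtain ⟨q', hq'⟩ := (Reachable.exists_walk_length_eq_dist ⟨q⟩)
    calc G.dist v w ≤ (q'.map (induceValHom G _)).length :=
          SimpleGraph.dist_le _
    _ = (G.induce (Subtree G rt v)).dist ⟨v, hv⟩ ⟨w, hw⟩ := by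
          rw [Walk.length_map, hq']

lemma mem_supp_iff_reachable {G : SimpleGraph V} {u z : V} :
    z ∈ (G.connectedComponentMk u).supp ↔ G.Reachable u z := by
  rw [ConnectedComponent.mem_supp_iff, ConnectedComponent.eq]
  exact ⟨Reachable.symm, Reachable.symm⟩

lemma deleteEdges_induce_eq {S : Set V} {w u : V} (hw : w ∈ S) (hu : u ∈ S) :
    (G.induce S).deleteEdges {s((⟨w, hw⟩ : S), (⟨u, hu⟩ : S))} =
      (G.deleteEdges {s(w, u)}).induce S := by
  ext a b
  simp only [deleteEdges_adj, comap_adj, Function.Embedding.coe_subtype,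
    Set.mem_singleton_iff, Sym2.eq_iff, Subtype.ext_iff]

end InduceLemmas

section Dangling

variable {G : SimpleGraph V}

lemma danglingThin_eq (hT : G.IsTree) [Finite V] {rt v w u : V}
    (hw : w ∈ Subtree G rt v) (hu : u ∈ Subtree G rt v) (hwu : G.Adj w u)
    (hd : G.dist rt w + 1 = G.dist rt u) :
    DanglingThin (G.induce (Subtree G rt v)) ⟨w, hw⟩ ⟨u, hu⟩ = DanglingThin G w u := by
  classical
  set S := Subtree G rt v with hS
  have heq := deleteEdges_induce_eq (G := G) hw hu
  have hS1S : ∀ z, z ∈ ((G.deleteEdges {s(w,u)}).connectedComponentMk u).supp → z ∈ S := by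
    intro z hz
    rw [mem_supp_iff_reachable] at hz
    exact subtree_trans hT.isConnected hu (dangling_mem_subtree hT hwu hd hz)
  have hdown : ∀ z : S,
      z ∈ (((G.induce S).deleteEdges {s((⟨w,hw⟩:S),(⟨u,hu⟩:S))}).connectedComponentMk ⟨u,hu⟩).supp →
      (z : V) ∈ ((G.deleteEdges {s(w,u)}).connectedComponentMk u).supp := by
    intro z hz
    rw [mem_supp_iff_reachable] at hz ⊢
    rw [heq] at hz
    exact hz.map (induceValHom (G.deleteEdges {s(w,u)}) S)
  have hup : ∀ z (hzS : z ∈ S),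
      z ∈ ((G.deleteEdges {s(w,u)}).connectedComponentMk u).supp →
      (⟨z, hzS⟩ : S) ∈ (((G.induce S).deleteEdges {s((⟨w,hw⟩:S),(⟨u,hu⟩:S))}).connectedComponentMk ⟨u,hu⟩).supp := by
    intro z hzS hz
    rw [mem_supp_iff_reachable] at hz ⊢
    rw [heq]
    obtain ⟨p⟩ := hz
    have hs : ∀ y ∈ p.support, y ∈ S := by
      intro y hy
      exact hS1S y (by rw [mem_supp_iff_reachable]; exact ⟨p.takeUntil y hy⟩)
    obtain ⟨q, -⟩ := exists_induce_walk p hs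
    exact ⟨q⟩
  apply le_antisymm
  · apply thinness_le_of_embed _ _
      (fun z => (⟨z.val.val, hdown z.val z.prop⟩ :
        ((G.deleteEdges {s(w,u)}).connectedComponentMk u).supp))
    · intro a b hab
      simp only [Subtype.mk.injEq] at hab
      exact Subtype.ext (Subtype.ext hab)
    · intro a b
      simp [comap_adj, Function.Embedding.coe_subtype]
  · apply thinness_le_of_embed _ _
      (fun z => (⟨⟨z.val, hS1S z.val z.prop⟩, hup z.val (hS1S z.val z.prop) z.prop⟩ :
        (((G.induce S).deleteEdges {s((⟨w,hw⟩:S),(⟨u,hu⟩:S))}).connectedComponentMk ⟨u,hu⟩).supp))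
    · intro a b hab
      simp only [Subtype.mk.injEq] at hab
      exact Subtype.ext hab
    · intro a b
      simp [comap_adj, Function.Embedding.coe_subtype]

end Dangling

theorem critical_of_subtree [Fintype V] (G : SimpleGraph V) (hT : G.IsTree)
    (rt x v : V) (hcrit : Critical G rt x) (hanc : IsAncestor G rt v x)
    (hv : v ∈ Subtree G rt v) (hx : x ∈ Subtree G rt v) :
    Critical (G.induce (Subtree G rt v)) ⟨v, hv⟩ ⟨x, hx⟩ := by
  classical
  have hc := hT.isConnected
  unfold Critical at hcrit ⊢
  set S := Subtree G rt v with hS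
  set H := G.induce S with hH
  set k := Thinness G with hk
  have hxS : G.dist rt v + G.dist v x = G.dist rt x := hx
  have hadjHG : ∀ (a b : S), H.Adj a b ↔ G.Adj a.val b.val := by
    intro a b
    simp [hH, comap_adj, Function.Embedding.coe_subtype]
  have hdist : ∀ {a : V} (ha : a ∈ S), H.dist ⟨v, hv⟩ ⟨a, ha⟩ = G.dist v a :=
    fun ha => induce_dist_eq hT hv ha
  -- every child k-neighbor of x gives a child u with the right distances
  have hchild : ∀ {w : V}, ChildKNeighbor G rt k x w →
      w ∈ S ∧ ∀ {u : V}, G.Adj w u → u ≠ x →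
        (G.dist rt w + 1 = G.dist rt u ∧ u ∈ S) := by
    intro w hcw
    obtain ⟨⟨hxw, hdw⟩, -⟩ := hcw
    have hwS : w ∈ S := child_mem_subtree hc hx hxw hdw
    refine ⟨hwS, ?_⟩
    intro u hwu hux
    have hdu : G.dist rt w + 1 = G.dist rt u := by
      rcases adj_dist_cases hT rt hwu with h | h
      · exact h
      · exact absurd (parent_unique hT rt hwu.symm hxw h hdw) hux
    exact ⟨hdu, child_mem_subtree hc hwS hwu hdu⟩
  -- Thinness H = k
  have hkH : Thinness H = k := by
    apply le_antisymm
    · exact thinness_le_of_embed G H Subtype.val Subtype.val_injective hadjHG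
    · have hne : {w | ChildKNeighbor G rt k x w}.Nonempty := by
        apply Set.nonempty_of_ncard_ne_zero
        rw [hcrit]
        omega
      obtain ⟨w, hcw⟩ := hne
      obtain ⟨hwS, hrest⟩ := hchild hcw
      obtain ⟨-, u, hwu, hux, hdang⟩ := hcw.2
      obtain ⟨hdu, huS⟩ := hrest hwu hux
      have hS1S : ∀ z, z ∈ ((G.deleteEdges {s(w,u)}).connectedComponentMk u).supp → z ∈ S := by
        intro z hz
        rw [mem_supp_iff_reachable] at hz
        exact subtree_trans hc huS (dangling_mem_subtree hT hwu hdu hz)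
      refine le_trans hdang ?_
      apply thinness_le_of_embed H _ (fun z => (⟨z.val, hS1S z.val z.prop⟩ : S))
      · intro a b hab
        simp only [Subtype.mk.injEq] at hab
        exact Subtype.ext hab
      · intro a b
        simp [comap_adj, Function.Embedding.coe_subtype, hH]
  rw [hkH]
  -- the two sets correspond under Subtype.val
  have hset : Subtype.val '' {w' : S | ChildKNeighbor H ⟨v, hv⟩ k ⟨x, hx⟩ w'} =
      {w | ChildKNeighbor G rt k x w} := by
    ext w
    constructor
    · rintro ⟨⟨w, hwS⟩, hcw', rfl⟩
      obtain ⟨⟨hadj', hd'⟩, -, u', hwu', hux', hdang'⟩ := hcw'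
      obtain ⟨u, huS⟩ := u'
      have hxw : G.Adj x w := (hadjHG _ _).1 hadj'
      rw [hdist hx, hdist hwS] at hd'
      have hdw : G.dist rt x + 1 = G.dist rt w := by
        have h1 : G.dist rt v + G.dist v w = G.dist rt w := hwS
        omega
      have hwu : G.Adj w u := (hadjHG _ _).1 hwu'
      have hux : u ≠ x := fun h => hux' (Subtype.ext h)
      have hdu : G.dist rt w + 1 = G.dist rt u := by
        rcases adj_dist_cases hT rt hwu with h | h
        · exact h
        · exact absurd (parent_unique hT rt hwu.symm hxw h hdw) hux
      refine ⟨⟨hxw, hdw⟩, hxw, u, hwu, hux, ?_⟩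
      rw [← danglingThin_eq hT hwS huS hwu hdu]
      exact hdang'
    · intro hcw
      obtain ⟨hwS, hrest⟩ := hchild hcw
      obtain ⟨⟨hxw, hdw⟩, -, u, hwu, hux, hdang⟩ := hcw
      obtain ⟨hdu, huS⟩ := hrest hwu hux
      refine ⟨⟨w, hwS⟩, ⟨⟨(hadjHG _ _).2 hxw, ?_⟩, (hadjHG _ _).2 hxw, ⟨u, huS⟩,
        (hadjHG _ _).2 hwu, ?_, ?_⟩, rfl⟩
      · rw [hdist hx, hdist hwS]
        have h1 : G.dist rt v + G.dist v w = G.dist rt w := hwS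
        omega
      · intro h
        exact hux (congrArg Subtype.val h)
      · rw [danglingThin_eq hT hwS huS hwu hdu]
        exact hdang
  rw [← hcrit, ← hset]
  exact (Set.ncard_image_of_injective _ Subtype.val_injective).symm
end

section
/- A graph G has thinness at least k if and only if for every strict total order ≺ on V(G), the auxiliary graph G_≺ contains a clique of size k. -/
open SimpleGraph

variable {V : Type*}

def AuxAdjHalf (G : SimpleGraph V) (r : V → V → Prop) (v w : V) : Prop :=
  r v w ∧ ∃ z, r w z ∧ G.Adj z v ∧ ¬ G.Adj z w

def AuxGraph (G : SimpleGraph V) (r : V → V → Prop) : SimpleGraph V where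
  Adj v w := v ≠ w ∧ (AuxAdjHalf G r v w ∨ AuxAdjHalf G r w v)
  symm := ⟨fun v w => by intro ⟨h1, h2⟩; exact ⟨h1.symm, h2.symm⟩⟩
  loopless := ⟨fun v => by intro ⟨h1, _⟩; exact h1 rfl⟩



open Finset

variable {α : Type*} [DecidableEq α]

/-- antichain for a relation `q` on a finset -/
def IsAC (q : α → α → Prop) (t : Finset α) : Prop := ∀ x ∈ t, ∀ y ∈ t, x ≠ y → ¬ q x y

noncomputable def maxA (q : α → α → Prop) (s : Finset α) : ℕ :=
  (@Finset.filter _ (fun t => IsAC q t) (Classical.decPred _) s.powerset).sup Finset.card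

lemma le_maxA {q : α → α → Prop} {s t : Finset α} (hts : t ⊆ s) (ht : IsAC q t) :
    t.card ≤ maxA q s := by
  apply Finset.le_sup
  simp only [Finset.mem_filter, Finset.mem_powerset]
  exact ⟨hts, ht⟩

lemma maxA_le {q : α → α → Prop} {s : Finset α} {m : ℕ}
    (h : ∀ t ⊆ s, IsAC q t → t.card ≤ m) : maxA q s ≤ m := by
  apply Finset.sup_le
  intro t ht
  simp only [Finset.mem_filter, Finset.mem_powerset] at ht
  exact h t ht.1 ht.2

lemma maxA_mono {q : α → α → Prop} {s s' : Finset α} (h : s ⊆ s') :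
    maxA q s ≤ maxA q s' :=
  maxA_le fun t hts hac => le_maxA (hts.trans h) hac

lemma exists_maxA_witness (q : α → α → Prop) (s : Finset α) :
    ∃ t ⊆ s, IsAC q t ∧ t.card = maxA q s := by
  classical
  have hne : (@Finset.filter _ (fun t => IsAC q t) (Classical.decPred _) s.powerset).Nonempty := by
    refine ⟨∅, ?_⟩
    simp only [Finset.mem_filter, Finset.mem_powerset]
    exact ⟨Finset.empty_subset _, fun x hx => absurd hx (by simp)⟩
  obtain ⟨t, ht, hcard⟩ := Finset.exists_mem_eq_sup _ hne Finset.card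
  simp only [Finset.mem_filter, Finset.mem_powerset] at ht
  exact ⟨t, ht.1, ht.2, hcard.symm⟩

/-- greatest element of a finite nonempty chain -/
lemma chain_greatest (q : α → α → Prop) (hrefl : ∀ x, q x x)
    (htrans : ∀ {x y z}, q x y → q y z → q x z)
    (t : Finset α) (ht : t.Nonempty)
    (htot : ∀ x ∈ t, ∀ y ∈ t, q x y ∨ q y x) :
    ∃ g ∈ t, ∀ x ∈ t, q x g := by
  induction t using Finset.induction_on with
  | empty => exact absurd ht (by simp)
  | @insert a t' ha ih =>
    rcases t'.eq_empty_or_nonempty with rfl | hne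
    · exact ⟨a, by simp, by simp [hrefl]⟩
    · obtain ⟨g, hg, hgmax⟩ := ih hne
        (fun x hx y hy => htot x (mem_insert_of_mem hx) y (mem_insert_of_mem hy))
      rcases htot g (mem_insert_of_mem hg) a (mem_insert_self _ _) with hga | hag
      · exact ⟨a, mem_insert_self _ _, fun x hx => by
          rcases mem_insert.1 hx with rfl | hx
          · exact hrefl x
          · exact htrans (hgmax x hx) hga⟩
      · exact ⟨g, mem_insert_of_mem hg, fun x hx => by
          rcases mem_insert.1 hx with rfl | hx
          · exact hag
          · exact hgmax x hx⟩

/-- maximal element of a finite nonempty set wrt antisymmetric transitive q -/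
lemma exists_q_maximal (q : α → α → Prop)
    (htrans : ∀ {x y z}, q x y → q y z → q x z)
    (hanti : ∀ {x y}, q x y → q y x → x = y)
    (s : Finset α) (hs : s.Nonempty) :
    ∃ a ∈ s, ∀ b ∈ s, q a b → a = b := by
  induction s using Finset.induction_on with
  | empty => exact absurd hs (by simp)
  | @insert a t' ha ih =>
    rcases t'.eq_empty_or_nonempty with rfl | hne
    · exact ⟨a, by simp, fun b hb => by simp at hb; subst hb; intro; rfl⟩
    · obtain ⟨g, hg, hgmax⟩ := ih hne
      by_cases hga : q g a
      · refine ⟨a, mem_insert_self _ _, fun b hb hab => ?_⟩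
        rcases mem_insert.1 hb with rfl | hb
        · rfl
        · have := hgmax b hb (htrans hga hab)
          subst this
          exact hanti hab hga
      · refine ⟨g, mem_insert_of_mem hg, fun b hb hgb => ?_⟩
        rcases mem_insert.1 hb with rfl | hb
        · exact absurd hgb hga
        · exact hgmax b hb hgb

lemma antichain_meets_fibers {q : α → α → Prop} {s : Finset α} {f : α → ℕ} {k : ℕ}
    (hk : 1 ≤ k)
    (hfb : ∀ x ∈ s, f x < k)
    (hch : ∀ x ∈ s, ∀ y ∈ s, f x = f y → q x y ∨ q y x)
    {t : Finset α} (hts : t ⊆ s) (hac : IsAC q t) (hcard : t.card = k) :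
    ∀ i < k, ∃ y ∈ t, f y = i := by
  classical
  intro i hi
  by_contra hcon
  push_neg at hcon
  have hsum : t.card = ∑ j ∈ range k, (t.filter fun x => f x = j).card :=
    Finset.card_eq_sum_card_fiberwise (fun x hx => mem_range.2 (hfb x (hts hx)))
  have hone : ∀ j, (t.filter fun x => f x = j).card ≤ 1 := by
    intro j
    refine Finset.card_le_one.2 fun x hx y hy => ?_
    simp only [mem_filter] at hx hy
    by_contra hne
    rcases hch x (hts hx.1) y (hts hy.1) (hx.2.trans hy.2.symm) with h | h
    · exact hac x hx.1 y hy.1 hne h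
    · exact hac y hy.1 x hx.1 (Ne.symm hne) h
  have hzero : (t.filter fun x => f x = i).card = 0 := by
    refine Finset.card_eq_zero.2 (Finset.filter_eq_empty_iff.2 ?_)
    intro x hx
    exact hcon x hx
  have hmemi : i ∈ range k := mem_range.2 hi
  have hsplit : (∑ j ∈ range k, (t.filter fun x => f x = j).card)
      = (t.filter fun x => f x = i).card
        + ∑ j ∈ (range k).erase i, (t.filter fun x => f x = j).card :=
    (Finset.add_sum_erase _ _ hmemi).symm
  have hbound : ∑ j ∈ (range k).erase i, (t.filter fun x => f x = j).card
      ≤ ((range k).erase i).card := by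
    calc ∑ j ∈ (range k).erase i, (t.filter fun x => f x = j).card
        ≤ ∑ _j ∈ (range k).erase i, 1 := Finset.sum_le_sum fun j _ => hone j
      _ = ((range k).erase i).card := by simp
  have hec : ((range k).erase i).card = k - 1 := by
    rw [Finset.card_erase_of_mem hmemi, Finset.card_range]
  omega

lemma dilworth (q : α → α → Prop) (hrefl : ∀ x, q x x)
    (htrans : ∀ {x y z}, q x y → q y z → q x z)
    (hanti : ∀ {x y}, q x y → q y x → x = y) :
    ∀ (n : ℕ) (s : Finset α), s.card ≤ n →
      ∃ f : α → ℕ, (∀ x ∈ s, f x < maxA q s) ∧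
        (∀ x ∈ s, ∀ y ∈ s, f x = f y → q x y ∨ q y x) := by
  intro n
  induction n with
  | zero =>
    intro s hs
    have : s = ∅ := Finset.card_eq_zero.1 (Nat.le_zero.1 hs)
    subst this
    exact ⟨fun _ => 0, by simp, by simp⟩
  | succ n ih =>
    intro s hs
    classical
    rcases s.eq_empty_or_nonempty with rfl | hne
    · exact ⟨fun _ => 0, by simp, by simp⟩
    obtain ⟨a, has, hamax⟩ := exists_q_maximal q htrans hanti s hne
    set s' := s.erase a with hs'def
    have hs'card : s'.card ≤ n := by
      have h2 := Finset.card_erase_of_mem has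
      rw [← hs'def] at h2
      have h1 : 1 ≤ s.card := Finset.card_pos.2 hne
      omega
    obtain ⟨f', hf'b, hf'c⟩ := ih s' hs'card
    set k := maxA q s' with hkdef
    have hks : k ≤ maxA q s := maxA_mono (Finset.erase_subset _ _)
    by_cases hcase : k < maxA q s
    · -- easy case: put a in a new class
      refine ⟨fun x => if x = a then k else f' x, ?_, ?_⟩
      · intro x hx
        by_cases hxa : x = a
        · simpa [hxa] using hcase
        · simp only [if_neg hxa]
          exact lt_of_lt_of_le (hf'b x (Finset.mem_erase.2 ⟨hxa, hx⟩)) hks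
      · intro x hx y hy hfe
        by_cases hxa : x = a <;> by_cases hya : y = a
        · subst hxa; subst hya; exact Or.inl (hrefl _)
        · exfalso
          simp only [if_pos hxa, if_neg hya] at hfe
          exact absurd hfe.symm (Nat.ne_of_lt (hf'b y (Finset.mem_erase.2 ⟨hya, hy⟩)))
        · exfalso
          simp only [if_pos hya, if_neg hxa] at hfe
          exact absurd hfe (Nat.ne_of_lt (hf'b x (Finset.mem_erase.2 ⟨hxa, hx⟩)))
        · simp only [if_neg hxa, if_neg hya] at hfe
          exact hf'c x (Finset.mem_erase.2 ⟨hxa, hx⟩) y (Finset.mem_erase.2 ⟨hya, hy⟩) hfe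
    · -- hard case (Galvin)
      have hkeq : maxA q s = k := le_antisymm (not_lt.1 hcase) hks
      have hk1 : 1 ≤ k := by
        have hsing : IsAC q ({a} : Finset α) := by
          intro x hx y hy hxy
          simp only [Finset.mem_singleton] at hx hy
          exact absurd (hx.trans hy.symm) hxy
        have := le_maxA (Finset.singleton_subset_iff.2 has) hsing
        simp only [Finset.card_singleton] at this
        omega
      obtain ⟨t0, ht0s, ht0ac, ht0card⟩ := exists_maxA_witness q s'
      rw [← hkdef] at ht0card
      have hmeet : ∀ t ⊆ s', IsAC q t → t.card = k → ∀ i < k, ∃ y ∈ t, f' y = i :=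
        fun t hts hac hc => antichain_meets_fibers hk1 hf'b hf'c hts hac hc
      set P : α → Prop := fun x => ∃ t ⊆ s', IsAC q t ∧ t.card = k ∧ x ∈ t with hPdef
      have hA : ∀ i, i < k →
          ∃ gi, (gi ∈ s' ∧ f' gi = i ∧ P gi) ∧ ∀ x ∈ s', f' x = i → P x → q x gi := by
        intro i hi
        set A : Finset α := s'.filter (fun x => f' x = i ∧ P x) with hAdef
        obtain ⟨y, hyt, hyf⟩ := hmeet t0 ht0s ht0ac ht0card i hi
        have hyA : y ∈ A :=
          Finset.mem_filter.2 ⟨ht0s hyt, hyf, ⟨t0, ht0s, ht0ac, ht0card, hyt⟩⟩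
        have htotA : ∀ x ∈ A, ∀ y ∈ A, q x y ∨ q y x := by
          intro x hx y' hy'
          have hx' := Finset.mem_filter.1 hx
          have hy'' := Finset.mem_filter.1 hy'
          exact hf'c x hx'.1 y' hy''.1 (hx'.2.1.trans hy''.2.1.symm)
        obtain ⟨g, hgA, hgmax⟩ := chain_greatest q hrefl @htrans A ⟨y, hyA⟩ htotA
        have hg' := Finset.mem_filter.1 hgA
        exact ⟨g, ⟨hg'.1, hg'.2.1, hg'.2.2⟩,
          fun x hx hfx hPx => hgmax x (Finset.mem_filter.2 ⟨hx, hfx, hPx⟩)⟩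
      choose g0 hg0 using hA
      set gg : ℕ → α := fun i => if h : i < k then g0 i h else a with hggdef
      have hggmem : ∀ i < k, gg i ∈ s' := by
        intro i hi; simp only [hggdef, dif_pos hi]; exact (hg0 i hi).1.1
      have hggf : ∀ i < k, f' (gg i) = i := by
        intro i hi; simp only [hggdef, dif_pos hi]; exact (hg0 i hi).1.2.1
      have hggP : ∀ i < k, P (gg i) := by
        intro i hi; simp only [hggdef, dif_pos hi]; exact (hg0 i hi).1.2.2
      have hggmax : ∀ i, (h : i < k) → ∀ x ∈ s', f' x = i → P x → q x (gg i) := by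
        intro i hi; simp only [hggdef, dif_pos hi]; exact (hg0 i hi).2
      set B : Finset α := (range k).image gg with hBdef
      have hBs' : B ⊆ s' := by
        intro x hx
        obtain ⟨i, hi, rfl⟩ := Finset.mem_image.1 hx
        exact hggmem i (mem_range.1 hi)
      have haB : a ∉ B := fun h => (Finset.mem_erase.1 (hBs' h)).1 rfl
      have hBcard : B.card = k := by
        rw [hBdef, Finset.card_image_of_injOn, Finset.card_range]
        intro i hi j hj hij
        have h1 := hggf i (mem_range.1 hi)
        have h2 := hggf j (mem_range.1 hj)
        rw [← h1, ← h2, hij]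
      have hnotac : ¬ IsAC q (insert a B) := by
        intro hac
        have hsub : insert a B ⊆ s := by
          intro x hx
          rcases Finset.mem_insert.1 hx with rfl | hx
          · exact has
          · exact Finset.mem_of_mem_erase (hBs' hx)
        have := le_maxA hsub hac
        rw [Finset.card_insert_of_notMem haB, hBcard, hkeq] at this
        omega
      have hcomp : ∃ i, i < k ∧ q (gg i) a := by
        simp only [IsAC, not_forall] at hnotac
        obtain ⟨x, hx, y, hy, hxy, hq⟩ := hnotac
        rw [not_not] at hq
        rcases Finset.mem_insert.1 hx with rfl | hxB <;>
          rcases Finset.mem_insert.1 hy with h | hyB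
        · exact absurd h.symm hxy
        · exfalso
          exact hxy (hamax y (Finset.mem_of_mem_erase (hBs' hyB)) hq)
        · obtain ⟨i, hi, rfl⟩ := Finset.mem_image.1 hxB
          exact ⟨i, mem_range.1 hi, h ▸ hq⟩
        · exfalso
          obtain ⟨i, hi, rfl⟩ := Finset.mem_image.1 hxB
          obtain ⟨j, hj, rfl⟩ := Finset.mem_image.1 hyB
          have hik := mem_range.1 hi
          have hjk := mem_range.1 hj
          obtain ⟨t, hts, htac, htcard, hmem⟩ := hggP j hjk
          obtain ⟨y', hy't, hy'f⟩ := hmeet t hts htac htcard i hik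
          have hy'gi : q y' (gg i) :=
            hggmax i hik y' (hts hy't) hy'f ⟨t, hts, htac, htcard, hy't⟩
          have hy'ggj : q y' (gg j) := htrans hy'gi hq
          have hne : y' ≠ gg j := by
            intro h
            rw [h, hggf j hjk] at hy'f
            rw [← hggf i hik, ← hggf j hjk, hy'f] at hxy
            exact hxy rfl
          exact htac y' hy't (gg j) hmem hne hy'ggj
      obtain ⟨i0, hi0, hqa⟩ := hcomp
      set b := gg i0 with hbdef
      set K : Finset α := insert a (s'.filter fun x => f' x = i0 ∧ q x b) with hKdef
      set s'' := s \ K with hs''def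
      have haK : a ∈ K := Finset.mem_insert_self _ _
      have hs''sub : s'' ⊆ s' := by
        intro x hx
        have hx' := Finset.mem_sdiff.1 hx
        refine Finset.mem_erase.2 ⟨?_, hx'.1⟩
        intro h; exact hx'.2 (h ▸ haK)
      have hs''card : s''.card ≤ n := le_trans (Finset.card_le_card hs''sub) hs'card
      have hmaxA'' : maxA q s'' ≤ k - 1 := by
        refine maxA_le fun t hts hac => ?_
        have h1 : t ⊆ s' := hts.trans hs''sub
        have h2 : t.card ≤ k := le_maxA h1 hac
        by_contra hcon
        have hck : t.card = k := by omega
        obtain ⟨y, hyt, hyf⟩ := hmeet t h1 hac hck i0 hi0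
        have hqyb : q y b := hggmax i0 hi0 y (h1 hyt) hyf ⟨t, h1, hac, hck, hyt⟩
        have hyK : y ∈ K :=
          Finset.mem_insert_of_mem (Finset.mem_filter.2 ⟨h1 hyt, hyf, hqyb⟩)
        exact (Finset.mem_sdiff.1 (hts hyt)).2 hyK
      obtain ⟨f'', hf''b, hf''c⟩ := ih s'' hs''card
      have hf''lt : ∀ x ∈ s'', f'' x < k - 1 :=
        fun x hx => lt_of_lt_of_le (hf''b x hx) hmaxA''
      have hKchain : ∀ x ∈ K, ∀ y ∈ K, q x y ∨ q y x := by
        intro x hx y hy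
        rcases Finset.mem_insert.1 hx with rfl | hx <;>
          rcases Finset.mem_insert.1 hy with h | hy
        · exact Or.inl (h ▸ hrefl x)
        · have := (Finset.mem_filter.1 hy).2.2
          exact Or.inr (htrans this hqa)
        · subst h
          have := (Finset.mem_filter.1 hx).2.2
          exact Or.inl (htrans this hqa)
        · have hx' := Finset.mem_filter.1 hx
          have hy' := Finset.mem_filter.1 hy
          exact hf'c x hx'.1 y hy'.1 (hx'.2.1.trans hy'.2.1.symm)
      refine ⟨fun x => if x ∈ K then k - 1 else f'' x, ?_, ?_⟩
      · intro x hx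
        rw [hkeq]
        by_cases hxK : x ∈ K
        · simp only [if_pos hxK]; omega
        · simp only [if_neg hxK]
          have : x ∈ s'' := Finset.mem_sdiff.2 ⟨hx, hxK⟩
          have := hf''lt x this
          omega
      · intro x hx y hy hfe
        by_cases hxK : x ∈ K <;> by_cases hyK : y ∈ K
        · exact hKchain x hxK y hyK
        · exfalso
          simp only [if_pos hxK, if_neg hyK] at hfe
          have := hf''lt y (Finset.mem_sdiff.2 ⟨hy, hyK⟩)
          omega
        · exfalso
          simp only [if_pos hyK, if_neg hxK] at hfe
          have := hf''lt x (Finset.mem_sdiff.2 ⟨hx, hxK⟩)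
          omega
        · simp only [if_neg hxK, if_neg hyK] at hfe
          exact hf''c x (Finset.mem_sdiff.2 ⟨hx, hxK⟩) y (Finset.mem_sdiff.2 ⟨hy, hyK⟩) hfe

section Wrapper

open SimpleGraph

variable {V : Type*}

/-- the comparability order underlying the complement of the aux graph -/
def QRel (G : SimpleGraph V) (r : V → V → Prop) (v w : V) : Prop :=
  v = w ∨ (r v w ∧ ∀ z, r w z → G.Adj z v → G.Adj z w)

variable {G : SimpleGraph V} {r : V → V → Prop}

lemma qrel_refl (G : SimpleGraph V) (r : V → V → Prop) (x : V) : QRel G r x x := Or.inl rfl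

lemma qrel_trans (hr : IsStrictTotalOrder V r) :
    ∀ {x y z}, QRel G r x y → QRel G r y z → QRel G r x z := by
  haveI := hr
  intro x y z hxy hyz
  rcases hxy with rfl | ⟨hrxy, hcxy⟩
  · exact hyz
  rcases hyz with rfl | ⟨hryz, hcyz⟩
  · exact Or.inr ⟨hrxy, hcxy⟩
  refine Or.inr ⟨trans_of r hrxy hryz, fun w hzw hadj => ?_⟩
  exact hcyz w hzw (hcxy w (trans_of r hryz hzw) hadj)

lemma r_asymm (hr : IsStrictTotalOrder V r) {x y : V} (h1 : r x y) (h2 : r y x) : False := by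
  haveI := hr
  exact irrefl_of r x (trans_of r h1 h2)

lemma qrel_antisymm (hr : IsStrictTotalOrder V r) :
    ∀ {x y}, QRel G r x y → QRel G r y x → x = y := by
  intro x y hxy hyx
  rcases hxy with rfl | ⟨hrxy, -⟩
  · rfl
  rcases hyx with rfl | ⟨hryx, -⟩
  · rfl
  exact absurd (r_asymm hr hrxy hryx) not_false

lemma not_adj_of_qrel (hr : IsStrictTotalOrder V r) {x y : V} (h : QRel G r x y) :
    ¬ (AuxGraph G r).Adj x y := by
  rintro ⟨hne, hhalf⟩
  rcases h with rfl | ⟨hrxy, hc⟩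
  · exact hne rfl
  rcases hhalf with ⟨-, z, hyz, hzx, hzy⟩ | ⟨hryx, -⟩
  · exact hzy (hc z hyz hzx)
  · exact r_asymm hr hrxy hryx

lemma adj_of_not_qrel (hr : IsStrictTotalOrder V r) {x y : V} (hne : x ≠ y)
    (h1 : ¬ QRel G r x y) (h2 : ¬ QRel G r y x) : (AuxGraph G r).Adj x y := by
  haveI := hr
  rcases trichotomous_of r x y with hrxy | heq | hryx
  · refine ⟨hne, Or.inl ⟨hrxy, ?_⟩⟩
    have hna : ¬ ∀ z, r y z → G.Adj z x → G.Adj z y :=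
      fun hall => h1 (Or.inr ⟨hrxy, hall⟩)
    push_neg at hna
    obtain ⟨z, hz1, hz2, hz3⟩ := hna
    exact ⟨z, hz1, hz2, hz3⟩
  · exact absurd heq hne
  · refine ⟨hne, Or.inr ⟨hryx, ?_⟩⟩
    have hna : ¬ ∀ z, r x z → G.Adj z y → G.Adj z x :=
      fun hall => h2 (Or.inr ⟨hryx, hall⟩)
    push_neg at hna
    obtain ⟨z, hz1, hz2, hz3⟩ := hna
    exact ⟨z, hz1, hz2, hz3⟩

end Wrapper

theorem thinness_iff_clique [Fintype V] (G : SimpleGraph V) (k : ℕ) :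
    k ≤ Thinness G ↔
      ∀ r : V → V → Prop, IsStrictTotalOrder V r →
        ∃ s : Finset V, (AuxGraph G r).IsNClique k s := by
  classical
  constructor
  · intro hk r hr
    set m := maxA (QRel G r) (Finset.univ : Finset V) with hm
    obtain ⟨f, hfb, hfc⟩ := dilworth (QRel G r) (qrel_refl G r) (qrel_trans hr)
      (qrel_antisymm hr) (Finset.univ : Finset V).card Finset.univ le_rfl
    have hthin : IsKThin G m := by
      refine ⟨r, hr, fun x => ⟨f x, hfb x (Finset.mem_univ x)⟩, ?_⟩
      intro u v w hruv hrvw hC hadj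
      have hfe : f u = f v := congrArg Fin.val hC
      rcases hfc u (Finset.mem_univ u) v (Finset.mem_univ v) hfe with hq | hq
      · rcases hq with rfl | ⟨-, hc⟩
        · exact hadj
        · exact (hc w hrvw hadj.symm).symm
      · rcases hq with rfl | ⟨hrvu, -⟩
        · exact hadj
        · exact absurd (r_asymm hr hruv hrvu) not_false
    have hm' : Thinness G ≤ m := Nat.sInf_le hthin
    have hkm : k ≤ m := le_trans hk hm'
    obtain ⟨t, -, htac, htcard⟩ := exists_maxA_witness (QRel G r) Finset.univ
    obtain ⟨t', ht't, ht'card⟩ := Finset.exists_subset_card_eq (s := t) (n := k) (by rw [htcard]; exact hkm)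
    refine ⟨t', ⟨?_, ht'card⟩⟩
    intro x hx y hy hne
    exact adj_of_not_qrel hr hne
      (htac x (ht't hx) y (ht't hy) hne)
      (htac y (ht't hy) x (ht't hx) hne.symm)
  · intro h
    refine le_csInf ⟨Fintype.card V, ?_⟩ ?_
    · set e := Fintype.equivFin V with he
      refine ⟨fun a b => e a < e b, ?_, e, ?_⟩
      · exact {
          trichotomous := fun a b => by
            intro h1 h2
            exact e.injective (le_antisymm (not_lt.1 h2) (not_lt.1 h1))
          irrefl := fun a => lt_irrefl _
          trans := fun a b c hab hbc => lt_trans hab hbc }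
      · intro u v w hruv hrvw hC hadj
        have huv : u = v := e.injective hC
        subst huv
        exact hadj
    · rintro m ⟨r, hr, C, hC⟩
      obtain ⟨s, hclq⟩ := h r hr
      have hinj : Set.InjOn C ↑s := by
        intro x hx y hy hCe
        by_contra hne
        have hadj := hclq.1 hx hy hne
        obtain ⟨-, hhalf⟩ := hadj
        rcases hhalf with ⟨hrxy, z, hyz, hzx, hzy⟩ | ⟨hryx, z, hxz, hzy, hzx⟩
        · exact hzy (hC x y z hrxy hyz hCe hzx.symm).symm
        · exact hzx (hC y x z hryx hxz hCe.symm hzy.symm).symm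
      have hle := Finset.card_le_card_of_injOn C (fun x _ => Finset.mem_univ (C x)) hinj
      rw [hclq.2] at hle
      simpa using hle
end
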